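/- arXiv:1901.06670 — 7 statements merged into one kernel-verified Lean document; each statement's English description precedes it below -/
import Mathlib

section
/- Let a ∈ L^∞(ℝ) be 1-periodic, i.e. a(x+k) = a(x) for almost every x ∈ ℝ and every k ∈ ℤ, and set a_n(x) := a(n·x) for n ∈ ℕ. Then for every bounded interval I ⊆ ℝ one has ∫_I a_n(x) dx → 𝔐(a) · |I| as n → ∞, where 𝔐(a) := ∫_{[0,1)} a(y) dy is the mean value of a and |I| the length of I. -/
open MeasureTheory Filter

private lemma qmp_mul_left' {c : ℝ} (hc : c ≠ 0) :
    Measure.QuasiMeasurePreserving (fun x : ℝ => c * x) volume volume := by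
  refine ⟨measurable_const_mul c, ?_⟩
  rw [show (fun x : ℝ => c * x) = (c * ·) from rfl, Real.map_volume_mul_left hc]
  refine Measure.AbsolutelyContinuous.mk fun s _ hs => ?_
  simp [hs]

/-- For a 1-periodic `a ∈ L^∞(ℝ)` and `a_n := a(n·)`, the integral of `a_n`
over any bounded interval `I` converges to the mean value `𝔐(a)` times the length of `I`. -/
theorem stmt_0 (a : ℝ → ℝ) (ha : MemLp a ⊤ volume)
    (hper : ∀ k : ℤ, ∀ᵐ x : ℝ ∂volume, a (x + k) = a x)
    (I : Set ℝ) (hImeas : MeasurableSet I) (hIbd : Bornology.IsBounded I)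
    (hIint : I.OrdConnected) :
    Tendsto (fun n : ℕ => ∫ x in I, a (n * x))
      atTop (nhds ((∫ y in Set.Ico (0 : ℝ) 1, a y) * (volume I).toReal)) := by
  obtain ⟨g, hgsm, hag⟩ := ha.aestronglyMeasurable
  set b : ℝ → ℝ := fun x => g (Int.fract x) with hb_def
  have hb_per : Function.Periodic b 1 := fun x => by
    simp only [hb_def, Int.fract_add_one]
  -- b agrees a.e. with a
  have h1 : ∀ k : ℤ, ∀ᵐ x : ℝ ∂volume, g (x - k) = a x := by
    intro k
    have hmp := (measurePreserving_add_right volume (-(k : ℝ))).quasiMeasurePreserving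
    have e1 : ∀ᵐ x : ℝ ∂volume, a ((x + -(k : ℝ)) + k) = a (x + -(k : ℝ)) := hmp.ae (hper k)
    have e2 := hmp.ae_eq hag
    filter_upwards [e1, e2] with x hx1 hx2
    have hxx : x + -(k : ℝ) + k = x := by ring
    simp only [Function.comp] at hx2
    rw [sub_eq_add_neg, ← hx2, ← hx1, hxx]
  have hba : b =ᵐ[volume] a := by
    have hall : ∀ᵐ x : ℝ ∂volume, ∀ k : ℤ, g (x - k) = a x := ae_all_iff.mpr h1
    filter_upwards [hall] with x hx
    have : b x = g (x - ⌊x⌋) := rfl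
    rw [this]; exact hx ⌊x⌋
  have hb_mem : MemLp b ⊤ volume := ha.ae_eq hba.symm
  have h_int : ∀ t₁ t₂ : ℝ, IntervalIntegrable b volume t₁ t₂ := by
    intro t₁ t₂
    constructor <;>
    · rw [IntegrableOn]
      exact (hb_mem.restrict _).integrable le_top
  set M : ℝ := ∫ x in (0:ℝ)..1, b x with hM_def
  set C : ℝ := (∫ x in (0:ℝ)..1, |b x|) + |M| with hC_def
  -- key periodicity identity for the primitive
  have key : ∀ t : ℝ, (∫ x in (0:ℝ)..t, b x)
      = (∫ x in (0:ℝ)..Int.fract t, b x) + (⌊t⌋ : ℝ) * M := by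
    intro t
    have ht : t = Int.fract t + (⌊t⌋ : ℤ) • (1 : ℝ) := by
      rw [zsmul_eq_mul, mul_one, Int.fract_add_floor]
    conv_lhs => rw [ht]
    rw [← intervalIntegral.integral_add_adjacent_intervals (h_int 0 (Int.fract t))
        (h_int (Int.fract t) (Int.fract t + (⌊t⌋ : ℤ) • (1:ℝ))),
      hb_per.intervalIntegral_add_zsmul_eq ⌊t⌋ (Int.fract t) h_int,
      hb_per.intervalIntegral_add_eq (Int.fract t) 0, zero_add, zsmul_eq_mul]
  have habs : ∀ t : ℝ, |(∫ x in (0:ℝ)..t, b x) - t * M| ≤ C := by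
    intro t
    rw [key t]
    have hts : t = Int.fract t + (⌊t⌋ : ℝ) := by rw [Int.fract_add_floor]
    have h2 : (∫ x in (0:ℝ)..Int.fract t, b x) + (⌊t⌋ : ℝ) * M - t * M
        = (∫ x in (0:ℝ)..Int.fract t, b x) - Int.fract t * M := by
      have h3 : (⌊t⌋ : ℝ) = t - Int.fract t := by
        have := Int.fract_add_floor t; linarith
      rw [h3]; ring
    rw [h2]
    have hb1 : |∫ x in (0:ℝ)..Int.fract t, b x| ≤ ∫ x in (0:ℝ)..1, |b x| := by
      calc |∫ x in (0:ℝ)..Int.fract t, b x| ≤ ∫ x in (0:ℝ)..Int.fract t, |b x| :=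
            intervalIntegral.abs_integral_le_integral_abs (Int.fract_nonneg t)
        _ ≤ ∫ x in (0:ℝ)..1, |b x| := by
            refine intervalIntegral.integral_mono_interval le_rfl (Int.fract_nonneg t)
              (Int.fract_lt_one t).le ?_ (h_int 0 1).abs
            filter_upwards with x using abs_nonneg _
    have hb2 : |Int.fract t * M| ≤ |M| := by
      rw [abs_mul]
      have := abs_nonneg M
      nlinarith [Int.fract_nonneg t, (Int.fract_lt_one t).le, abs_of_nonneg (Int.fract_nonneg t)]
    calc |(∫ x in (0:ℝ)..Int.fract t, b x) - Int.fract t * M|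
        ≤ |∫ x in (0:ℝ)..Int.fract t, b x| + |Int.fract t * M| := abs_sub _ _
      _ ≤ C := by rw [hC_def]; linarith
  -- the mean value of a equals M
  have hMa : (∫ y in Set.Ico (0:ℝ) 1, a y) = M := by
    rw [hM_def, intervalIntegral.integral_of_le zero_le_one,
      ← setIntegral_congr_set Ico_ae_eq_Ioc]
    exact integral_congr_ae (ae_restrict_of_ae hba.symm)
  rcases Set.eq_empty_or_nonempty I with rfl | hne
  · simp
  obtain ⟨x₀, hx₀⟩ := hne
  set α : ℝ := sInf I with hα_def
  set β : ℝ := sSup I with hβ_def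
  have hbb : BddBelow I := hIbd.bddBelow
  have hba' : BddAbove I := hIbd.bddAbove
  have hαβ : α ≤ β := csInf_le_csSup ⟨x₀, hx₀⟩ hbb hba'
  have hsub : I ⊆ Set.Icc α β := fun x hx => ⟨csInf_le hbb hx, le_csSup hba' hx⟩
  have hsup : Set.Ioo α β ⊆ I := by
    intro x hx
    obtain ⟨y, hyI, hy⟩ := exists_lt_of_csInf_lt ⟨x₀, hx₀⟩ hx.1
    obtain ⟨z, hzI, hz⟩ := exists_lt_of_lt_csSup ⟨x₀, hx₀⟩ hx.2
    exact hIint.out hyI hzI ⟨hy.le, hz.le⟩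
  have hIae : I =ᵐ[volume] Set.Ioc α β := by
    rw [MeasureTheory.ae_eq_set]
    constructor
    · refine measure_mono_null (fun x hx => ?_) (Real.volume_singleton (a := α))
      obtain ⟨hxI, hxn⟩ := hx
      have hxc := hsub hxI
      have hxa : ¬ α < x := fun h => hxn ⟨h, hxc.2⟩
      exact le_antisymm (not_lt.1 hxa) hxc.1
    · refine measure_mono_null (fun x hx => ?_) (Real.volume_singleton (a := β))
      obtain ⟨hxo, hxn⟩ := hx
      have : x ∉ Set.Ioo α β := fun h => hxn (hsup h)
      have : x = β := by
        rcases lt_or_eq_of_le hxo.2 with h | h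
        · exact absurd ⟨hxo.1, h⟩ this
        · exact h
      exact this
  have hvol : (volume I).toReal = β - α := by
    rw [measure_congr hIae, Real.volume_Ioc, ENNReal.toReal_ofReal (sub_nonneg.2 hαβ)]
  -- rewrite the integral for n ≥ 1
  have hstep : ∀ n : ℕ, 1 ≤ n → (∫ x in I, a (n * x))
      = (n:ℝ)⁻¹ * ((∫ x in (0:ℝ)..(n*β), b x) - ∫ x in (0:ℝ)..(n*α), b x) := by
    intro n hn
    have hn0 : (n:ℝ) ≠ 0 := Nat.cast_ne_zero.mpr (by omega)
    have h1 : (∫ x in I, a (n * x)) = ∫ x in Set.Ioc α β, b (n * x) := by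
      rw [setIntegral_congr_set hIae]
      refine integral_congr_ae (ae_restrict_of_ae ?_)
      have := (qmp_mul_left' hn0).ae_eq hba.symm
      filter_upwards [this] with x hx
      simpa [Function.comp] using hx
    rw [h1, ← intervalIntegral.integral_of_le hαβ,
      intervalIntegral.integral_comp_mul_left b hn0,
      ← intervalIntegral.integral_interval_sub_left (h_int 0 (n*β)) (h_int 0 (n*α))]
    simp [smul_eq_mul]
  rw [hMa, hvol]
  rw [tendsto_iff_dist_tendsto_zero]
  refine squeeze_zero' (Eventually.of_forall fun n => dist_nonneg)
    (eventually_atTop.mpr ⟨1, fun n hn => ?_⟩) (tendsto_const_div_atTop_nhds_zero_nat (2*C))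
  rw [Real.dist_eq, hstep n hn]
  have hn0 : (n:ℝ) ≠ 0 := Nat.cast_ne_zero.mpr (by omega)
  have hnpos : (0:ℝ) < n := by positivity
  have hrw : (n:ℝ)⁻¹ * ((∫ x in (0:ℝ)..(n*β), b x) - ∫ x in (0:ℝ)..(n*α), b x) - M * (β - α)
      = (n:ℝ)⁻¹ * (((∫ x in (0:ℝ)..(n*β), b x) - (n*β) * M)
        - ((∫ x in (0:ℝ)..(n*α), b x) - (n*α) * M)) := by
    field_simp
    ring
  rw [hrw, abs_mul, abs_inv, abs_of_nonneg hnpos.le]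
  rw [div_eq_mul_inv, mul_comm (2*C)]
  apply mul_le_mul_of_nonneg_left _ (by positivity)
  calc |((∫ x in (0:ℝ)..(n*β), b x) - (n*β) * M) - ((∫ x in (0:ℝ)..(n*α), b x) - (n*α) * M)|
      ≤ |(∫ x in (0:ℝ)..(n*β), b x) - (n*β) * M| + |(∫ x in (0:ℝ)..(n*α), b x) - (n*α) * M| :=
        abs_sub _ _
    _ ≤ 2 * C := by have := habs (n*β); have := habs (n*α); linarith
end

section
/- Let D and H₁ be complex Hilbert spaces and let C : D → H₁ be a bounded injective linear operator with closed range. Let a : H₁ → H₁ be a bounded linear operator and α > 0 such that Re⟨a q, q⟩ ≥ α‖q‖² for all q in the range of C. Then for every continuous linear functional f on D there exists a unique u ∈ D such that ⟨a(Cu), Cφ⟩ = f(φ) for all φ ∈ D. -/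
/-- abstract Lax–Milgram type theorem: If `C : D → H₁` is a bounded injective
linear operator between complex Hilbert spaces with closed range and `a : H₁ →L H₁` is bounded
with `Re⟨a q, q⟩ ≥ α‖q‖²` on the range of `C` for some `α > 0`, then for every continuous
linear functional `f` on `D` there is a unique `u ∈ D` with `⟨a(Cu), Cφ⟩ = f(φ)` for all `φ`. -/
theorem stmt_4
    {D H₁ : Type*} [NormedAddCommGroup D] [InnerProductSpace ℂ D] [CompleteSpace D]
    [NormedAddCommGroup H₁] [InnerProductSpace ℂ H₁] [CompleteSpace H₁]
    (C : D →L[ℂ] H₁) (hCinj : Function.Injective C) (hCrange : IsClosed (Set.range C))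
    (a : H₁ →L[ℂ] H₁) (α : ℝ) (hα : 0 < α)
    (hcoer : ∀ q ∈ Set.range C, α * ‖q‖ ^ 2 ≤ (inner ℂ (a q) q : ℂ).re)
    (f : D →L[ℂ] ℂ) :
    ∃! u : D, ∀ φ : D, (inner ℂ (a (C u)) (C φ) : ℂ) = f φ := by
  -- C is bounded below
  have hrange : IsClosed ((LinearMap.range (C : D →ₗ[ℂ] H₁) : Submodule ℂ H₁) : Set H₁) := by
    exact hCrange
  haveI : CompleteSpace (LinearMap.range (C : D →ₗ[ℂ] H₁)) := hrange.completeSpace_coe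
  set C' : D →L[ℂ] (LinearMap.range (C : D →ₗ[ℂ] H₁)) :=
    C.codRestrict (LinearMap.range (C : D →ₗ[ℂ] H₁)) (fun x => LinearMap.mem_range_self _ x) with hC'
  have hinj : LinearMap.ker (C' : D →ₗ[ℂ] (LinearMap.range (C : D →ₗ[ℂ] H₁))) = ⊥ := by
    rw [LinearMap.ker_eq_bot]
    intro x y hxy
    apply hCinj
    simpa [hC', ContinuousLinearMap.coe_codRestrict_apply, Subtype.ext_iff] using hxy
  have hsurj : LinearMap.range (C' : D →ₗ[ℂ] (LinearMap.range (C : D →ₗ[ℂ] H₁))) = ⊤ := by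
    rw [LinearMap.range_eq_top]
    rintro ⟨_, z, rfl⟩
    exact ⟨z, rfl⟩
  set e : D ≃L[ℂ] (LinearMap.range (C : D →ₗ[ℂ] H₁)) :=
    ContinuousLinearEquiv.ofBijective C' hinj hsurj with he
  set M : ℝ := ‖(e.symm : (LinearMap.range (C : D →ₗ[ℂ] H₁)) →L[ℂ] D)‖ + 1 with hM
  have hMpos : (0 : ℝ) < M := by
    have := norm_nonneg (e.symm : (LinearMap.range (C : D →ₗ[ℂ] H₁)) →L[ℂ] D)
    linarith
  have hup : ∀ u : D, ‖u‖ ≤ M * ‖C u‖ := by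
    intro u
    have h1 : e.symm (e u) = u := e.symm_apply_apply u
    have h2 : ‖e.symm (e u)‖ ≤ ‖(e.symm : (LinearMap.range (C : D →ₗ[ℂ] H₁)) →L[ℂ] D)‖ * ‖e u‖ :=
      (e.symm : (LinearMap.range (C : D →ₗ[ℂ] H₁)) →L[ℂ] D).le_opNorm (e u)
    have h3 : e u = C' u := by rw [he]; rfl
    have h4 : ‖C' u‖ = ‖C u‖ := rfl
    rw [h1, h3, h4] at h2
    have h5 : ‖(e.symm : (LinearMap.range (C : D →ₗ[ℂ] H₁)) →L[ℂ] D)‖ * ‖C u‖ ≤ M * ‖C u‖ := by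
      apply mul_le_mul_of_nonneg_right _ (norm_nonneg _)
      rw [hM]; linarith
    linarith
  have hlow : ∀ u : D, M⁻¹ * ‖u‖ ≤ ‖C u‖ := by
    intro u
    rw [inv_mul_le_iff₀ hMpos]
    exact hup u
  -- the operator T
  set T : D →L[ℂ] D := (ContinuousLinearMap.adjoint C).comp (a.comp C) with hT
  have hTinner : ∀ u φ : D, (inner ℂ (T u) φ : ℂ) = inner ℂ (a (C u)) (C φ) := by
    intro u φ
    simp [hT, ContinuousLinearMap.adjoint_inner_left]
  set β : ℝ := α * M⁻¹ ^ 2 with hβ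
  have hβpos : 0 < β := by positivity
  have hTcoer : ∀ u : D, β * ‖u‖ ^ 2 ≤ (inner ℂ (T u) u : ℂ).re := by
    intro u
    rw [hTinner]
    have h1 := hcoer (C u) ⟨u, rfl⟩
    have h2 : (M⁻¹ * ‖u‖) ^ 2 ≤ ‖C u‖ ^ 2 :=
      pow_le_pow_left₀ (by positivity) (hlow u) 2
    have h3 : α * (M⁻¹ * ‖u‖) ^ 2 ≤ α * ‖C u‖ ^ 2 :=
      mul_le_mul_of_nonneg_left h2 hα.le
    calc β * ‖u‖ ^ 2 = α * (M⁻¹ * ‖u‖) ^ 2 := by rw [hβ]; ring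
      _ ≤ α * ‖C u‖ ^ 2 := h3
      _ ≤ _ := h1
  have hTlow : ∀ u : D, β * ‖u‖ ≤ ‖T u‖ := by
    intro u
    rcases eq_or_ne u 0 with rfl | hu
    · simp
    have h1 := hTcoer u
    have h2 : (inner ℂ (T u) u : ℂ).re ≤ ‖T u‖ * ‖u‖ := by
      calc (inner ℂ (T u) u : ℂ).re ≤ ‖(inner ℂ (T u) u : ℂ)‖ := Complex.re_le_norm _
        _ ≤ ‖T u‖ * ‖u‖ := norm_inner_le_norm _ _
    have hun : 0 < ‖u‖ := norm_pos_iff.mpr hu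
    have h3 : β * ‖u‖ * ‖u‖ ≤ ‖T u‖ * ‖u‖ := by
      calc β * ‖u‖ * ‖u‖ = β * ‖u‖ ^ 2 := by ring
        _ ≤ (inner ℂ (T u) u : ℂ).re := h1
        _ ≤ ‖T u‖ * ‖u‖ := h2
    exact le_of_mul_le_mul_right h3 hun
  have hTinj : Function.Injective T := by
    intro x y hxy
    have h := hTlow (x - y)
    rw [map_sub, hxy, sub_self, norm_zero] at h
    have h2 : ‖x - y‖ ≤ 0 := by nlinarith [norm_nonneg (x - y)]
    rw [← sub_eq_zero]
    exact norm_le_zero_iff.mp h2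
  -- range of T is closed
  have hTanti : AntilipschitzWith β.toNNReal⁻¹ (⇑T) := by
    apply AntilipschitzWith.of_le_mul_dist
    intro x y
    rw [dist_eq_norm, dist_eq_norm, ← map_sub]
    rw [NNReal.coe_inv, Real.coe_toNNReal _ hβpos.le]
    rw [le_inv_mul_iff₀ hβpos]
    have := hTlow (x - y)
    linarith
  have hTrangeClosed : IsClosed ((LinearMap.range (T : D →ₗ[ℂ] D) : Submodule ℂ D) : Set D) := by
    have : IsClosed (Set.range (⇑T)) :=
      hTanti.isClosed_range T.uniformContinuous
    exact this
  haveI : CompleteSpace (LinearMap.range (T : D →ₗ[ℂ] D)) := hTrangeClosed.completeSpace_coe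
  -- T is surjective
  have hTsurj : LinearMap.range (T : D →ₗ[ℂ] D) = ⊤ := by
    rw [← Submodule.orthogonal_eq_bot_iff]
    rw [Submodule.eq_bot_iff]
    intro v hv
    rw [Submodule.mem_orthogonal] at hv
    have h0 : (inner ℂ (T v) v : ℂ) = 0 := hv (T v) ⟨v, rfl⟩
    have h1 := hTcoer v
    rw [h0] at h1
    simp only [Complex.zero_re] at h1
    have h2 : β * ‖v‖ ^ 2 ≤ β * 0 := by simpa using h1
    have h3 : ‖v‖ ^ 2 ≤ 0 := le_of_mul_le_mul_left h2 hβpos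
    have h4 : ‖v‖ ^ 2 = 0 := le_antisymm h3 (by positivity)
    have h5 : ‖v‖ = 0 := by
      have := pow_eq_zero_iff (n := 2) (by norm_num) |>.mp h4
      exact this
    exact norm_eq_zero.mp h5
  -- Riesz representation of f
  set y : D := (InnerProductSpace.toDual ℂ D).symm f with hy
  have hyf : ∀ φ : D, (inner ℂ y φ : ℂ) = f φ := by
    intro φ
    have h := (InnerProductSpace.toDual ℂ D).apply_symm_apply f
    calc (inner ℂ y φ : ℂ) = (InnerProductSpace.toDual ℂ D) y φ := rfl
      _ = f φ := by rw [hy, h]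
  obtain ⟨u, hu⟩ : ∃ u, T u = y := by
    have : y ∈ LinearMap.range (T : D →ₗ[ℂ] D) := by rw [hTsurj]; trivial
    exact this
  have hueq : ∀ φ : D, (inner ℂ (a (C u)) (C φ) : ℂ) = f φ := by
    intro φ
    rw [← hTinner, hu, hyf]
  refine ⟨u, hueq, ?_⟩
  intro v hv
  apply hTinj
  apply ext_inner_right ℂ
  intro φ
  rw [hTinner, hTinner, hv φ, hueq φ]
end

section
/- Let H be a complex Hilbert space, V ⊆ H a closed subspace with inclusion map ι : V → H, let a : H → H be a bounded linear operator and α > 0 such that Re⟨a v, v⟩ ≥ α‖v‖² for all v ∈ V. Then the compression ι* a ι : V → V is boundedly invertible and ‖(ι* a ι)^{-1}‖ ≤ 1/α. -/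
/-- If `V` is a closed subspace of a complex Hilbert space `H` and `a : H → H`
is bounded with `Re⟨a v, v⟩ ≥ α‖v‖²` on `V` for some `α > 0`, then the compression
`ι* a ι : V → V` is boundedly invertible with `‖(ι* a ι)⁻¹‖ ≤ 1/α`. -/
theorem stmt_7
    {H : Type*} [NormedAddCommGroup H] [InnerProductSpace ℂ H] [CompleteSpace H]
    (V : Submodule ℂ H) (hVclosed : IsClosed (V : Set H)) [CompleteSpace V]
    (a : H →L[ℂ] H) (α : ℝ) (hα : 0 < α)
    (hcoer : ∀ v ∈ V, α * ‖v‖ ^ 2 ≤ (inner ℂ (a v) v : ℂ).re) :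
    ∃ Tinv : V →L[ℂ] V,
      (V.orthogonalProjectionOnto.comp (a.comp V.subtypeL)).comp Tinv =
        ContinuousLinearMap.id ℂ V ∧
      Tinv.comp (V.orthogonalProjectionOnto.comp (a.comp V.subtypeL)) =
        ContinuousLinearMap.id ℂ V ∧
      ‖Tinv‖ ≤ 1 / α := by
  set T : V →L[ℂ] V := V.orthogonalProjectionOnto.comp (a.comp V.subtypeL) with hT
  -- key inner product identity
  have hinner : ∀ v : V, (inner ℂ (T v) v : ℂ) = inner ℂ (a (v : H)) (v : H) := by
    intro v
    have h := Submodule.inner_orthogonalProjectionOnto_eq_of_mem_right (K := V) v (a (v : H))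
    simpa [hT] using h
  have hcoerT : ∀ v : V, α * ‖v‖ ^ 2 ≤ (inner ℂ (T v) v : ℂ).re := by
    intro v
    rw [hinner v]
    simpa using hcoer (v : H) v.2
  -- lower bound: α ‖v‖ ≤ ‖T v‖
  have hbound : ∀ v : V, α * ‖v‖ ≤ ‖T v‖ := by
    intro v
    rcases eq_or_ne v 0 with rfl | hv
    · simp
    · have hvpos : 0 < ‖v‖ := norm_pos_iff.mpr hv
      have h1 : α * ‖v‖ ^ 2 ≤ ‖T v‖ * ‖v‖ := by
        calc α * ‖v‖ ^ 2 ≤ (inner ℂ (T v) v : ℂ).re := hcoerT v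
          _ ≤ ‖(inner ℂ (T v) v : ℂ)‖ := Complex.re_le_norm _
          _ ≤ ‖T v‖ * ‖v‖ := norm_inner_le_norm _ _
      have := (mul_le_mul_iff_of_pos_right hvpos).mp (by nlinarith [h1])
      nlinarith [h1, hvpos]
  have hanti : AntilipschitzWith (α⁻¹).toNNReal T := by
    apply T.antilipschitz_of_bound
    intro x
    have := hbound x
    have hc : ((α⁻¹).toNNReal : ℝ) = α⁻¹ := Real.coe_toNNReal _ (by positivity)
    rw [hc]
    rw [inv_mul_eq_div, le_div_iff₀ hα]
    linarith [hbound x]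
  -- injectivity
  have hker : LinearMap.ker (T : V →ₗ[ℂ] V) = ⊥ := LinearMap.ker_eq_bot_of_injective (f := (T : V →ₗ[ℂ] V)) hanti.injective
  -- range is closed
  have hclosed : IsClosed (LinearMap.range (T : V →ₗ[ℂ] V) : Set V) :=
    hanti.isClosed_range T.uniformContinuous
  haveI : CompleteSpace (LinearMap.range (T : V →ₗ[ℂ] V)) := hclosed.completeSpace_coe
  -- range is all of V: orthogonal complement is trivial
  have hrange : LinearMap.range (T : V →ₗ[ℂ] V) = ⊤ := by
    rw [← Submodule.orthogonal_eq_bot_iff]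
    rw [Submodule.eq_bot_iff]
    intro w hw
    have hTw : (inner ℂ (T w) w : ℂ) = 0 := by
      have := hw (T w) ⟨w, rfl⟩
      simpa [inner_eq_zero_symm] using this
    have h2 := hcoerT w
    rw [hTw] at h2
    simp only [Complex.zero_re] at h2
    have h3 : ‖w‖ ^ 2 ≤ 0 := by nlinarith
    have h4 : ‖w‖ ^ 2 = 0 := le_antisymm h3 (sq_nonneg _)
    have h5 : ‖w‖ = 0 := by
      have := pow_eq_zero_iff (n := 2) (by norm_num) |>.mp h4
      exact this
    exact norm_eq_zero.mp h5
  -- build the inverse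
  let e : V ≃L[ℂ] V := ContinuousLinearEquiv.ofBijective T hker hrange
  refine ⟨e.symm.toContinuousLinearMap, ?_, ?_, ?_⟩
  · ext v
    simp [e, ← hT]
  · ext v
    simp [e, ← hT]
  · apply ContinuousLinearMap.opNorm_le_bound _ (by positivity)
    intro v
    have h1 : α * ‖e.symm v‖ ≤ ‖T (e.symm v)‖ := hbound _
    have h2 : T (e.symm v) = v := e.apply_symm_apply v
    rw [h2] at h1
    have h0 : ‖e.symm.toContinuousLinearMap v‖ = ‖e.symm v‖ := rfl
    rw [h0, div_mul_eq_mul_div, le_div_iff₀ hα, one_mul]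
    linarith
end

section
/- Let H be a complex Hilbert space, V ⊆ H a closed subspace with orthogonal complement V^⊥, and denote by ι₀ : V → H and ι₁ : V^⊥ → H the inclusions. For a bounded operator a on H write the block components a₀₀ := ι₀* a ι₀, a₀₁ := ι₀* a ι₁, a₁₀ := ι₁* a ι₀, a₁₁ := ι₁* a ι₁. Suppose a is boundedly invertible and a₀₀ : V → V is boundedly invertible. Then the Schur complement a₁₁ − a₁₀ a₀₀^{-1} a₀₁ : V^⊥ → V^⊥ is boundedly invertible, the compression ι₁* a^{-1} ι₁ of the inverse a^{-1} to V^⊥ is boundedly invertible, and (ι₁* a^{-1} ι₁)^{-1} = a₁₁ − a₁₀ a₀₀^{-1} a₀₁. -/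
open ContinuousLinearMap

private lemma schur_aux {V W : Type*} [NormedAddCommGroup V] [NormedSpace ℂ V]
    [NormedAddCommGroup W] [NormedSpace ℂ W]
    (A : V →L[ℂ] V) (B : W →L[ℂ] V) (C : V →L[ℂ] W) (D : W →L[ℂ] W)
    (B' : W →L[ℂ] V) (C' : V →L[ℂ] W) (D' : W →L[ℂ] W) (b : V →L[ℂ] V)
    (hb1 : A.comp b = ContinuousLinearMap.id ℂ V)
    (hb2 : b.comp A = ContinuousLinearMap.id ℂ V)
    (e1 : C.comp B' + D.comp D' = ContinuousLinearMap.id ℂ W)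
    (e2 : A.comp B' + B.comp D' = 0)
    (e3 : C'.comp B + D'.comp D = ContinuousLinearMap.id ℂ W)
    (e4 : C'.comp A + D'.comp C = 0) :
    (D - C.comp (b.comp B)).comp D' = ContinuousLinearMap.id ℂ W ∧
      D'.comp (D - C.comp (b.comp B)) = ContinuousLinearMap.id ℂ W := by
  have hBD' : B.comp D' = -(A.comp B') := eq_neg_of_add_eq_zero_right e2
  have hDC : D'.comp C = -(C'.comp A) := eq_neg_of_add_eq_zero_right e4
  constructor
  · have : (D - C.comp (b.comp B)).comp D'
        = D.comp D' - C.comp (b.comp (B.comp D')) := by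
      rw [ContinuousLinearMap.sub_comp, ContinuousLinearMap.comp_assoc,
        ContinuousLinearMap.comp_assoc]
    rw [this, hBD', ContinuousLinearMap.comp_neg, ← ContinuousLinearMap.comp_assoc, hb2,
      ContinuousLinearMap.id_comp, ContinuousLinearMap.comp_neg, sub_neg_eq_add, add_comm]
    exact e1
  · have : D'.comp (D - C.comp (b.comp B))
        = D'.comp D - ((D'.comp C).comp b).comp B := by
      rw [ContinuousLinearMap.comp_sub, ContinuousLinearMap.comp_assoc,
        ContinuousLinearMap.comp_assoc]
    rw [this, hDC, ContinuousLinearMap.neg_comp, ContinuousLinearMap.neg_comp,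
      ContinuousLinearMap.comp_assoc C' A, hb1,
      ContinuousLinearMap.comp_id, sub_neg_eq_add, add_comm]
    exact e3

/-- Schur complement identity: for a boundedly invertible `a` on a complex
Hilbert space `H` decomposed along a closed subspace `V` and `Vᗮ`, if the block `a₀₀` is
boundedly invertible then the Schur complement `a₁₁ − a₁₀ a₀₀⁻¹ a₀₁` is boundedly invertible,
the compression `ι₁* a⁻¹ ι₁` of `a⁻¹` to `Vᗮ` is boundedly invertible, and
`(ι₁* a⁻¹ ι₁)⁻¹ = a₁₁ − a₁₀ a₀₀⁻¹ a₀₁`. -/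
theorem stmt_8
    {H : Type*} [NormedAddCommGroup H] [InnerProductSpace ℂ H] [CompleteSpace H]
    (V : Submodule ℂ H) (hVclosed : IsClosed (V : Set H)) [CompleteSpace V]
    (a ainv : H →L[ℂ] H)
    (ha₁ : a.comp ainv = ContinuousLinearMap.id ℂ H)
    (ha₂ : ainv.comp a = ContinuousLinearMap.id ℂ H)
    (b : V →L[ℂ] V)
    (hb₁ : ((Submodule.orthogonalProjectionOnto V).comp (a.comp V.subtypeL)).comp b =
      ContinuousLinearMap.id ℂ V)
    (hb₂ : b.comp ((Submodule.orthogonalProjectionOnto V).comp (a.comp V.subtypeL)) =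
      ContinuousLinearMap.id ℂ V) :
    ContinuousLinearMap.comp
      (((Submodule.orthogonalProjectionOnto Vᗮ).comp (a.comp Vᗮ.subtypeL)) -
        ((Submodule.orthogonalProjectionOnto Vᗮ).comp (a.comp V.subtypeL)).comp
          (b.comp ((Submodule.orthogonalProjectionOnto V).comp (a.comp Vᗮ.subtypeL))))
      ((Submodule.orthogonalProjectionOnto Vᗮ).comp (ainv.comp Vᗮ.subtypeL)) =
        ContinuousLinearMap.id ℂ Vᗮ ∧
    ContinuousLinearMap.comp
      ((Submodule.orthogonalProjectionOnto Vᗮ).comp (ainv.comp Vᗮ.subtypeL))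
      (((Submodule.orthogonalProjectionOnto Vᗮ).comp (a.comp Vᗮ.subtypeL)) -
        ((Submodule.orthogonalProjectionOnto Vᗮ).comp (a.comp V.subtypeL)).comp
          (b.comp ((Submodule.orthogonalProjectionOnto V).comp (a.comp Vᗮ.subtypeL)))) =
        ContinuousLinearMap.id ℂ Vᗮ := by
  set P : H →L[ℂ] V := Submodule.orthogonalProjectionOnto V with hP
  set Q : H →L[ℂ] Vᗮ := Submodule.orthogonalProjectionOnto Vᗮ with hQ
  set i0 : V →L[ℂ] H := V.subtypeL with hi0
  set i1 : Vᗮ →L[ℂ] H := Vᗮ.subtypeL with hi1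
  -- basic projection identities
  have hPi0 : P.comp i0 = ContinuousLinearMap.id ℂ V := by
    ext x; simp [hP, hi0]
  have hQi1 : Q.comp i1 = ContinuousLinearMap.id ℂ Vᗮ := by
    ext x; simp [hQ, hi1]
  have hPi1 : P.comp i1 = 0 := by
    ext x
    exact congrArg Subtype.val
      (Submodule.orthogonalProjectionOnto_apply_of_mem_orthogonal (K := V) x.2)
  have hQi0 : Q.comp i0 = 0 := by
    ext x
    exact congrArg Subtype.val
      (Submodule.orthogonalProjectionOnto_orthogonal_apply_eq_zero (K := V) x.2)
  have hdecomp : i0.comp P + i1.comp Q = ContinuousLinearMap.id ℂ H := by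
    rw [Submodule.id_eq_sum_starProjection_self_orthogonalComplement (K := V)]; rfl
  -- split any map into H
  have hsplit : ∀ (T : H →L[ℂ] H), T = i0.comp (P.comp T) + i1.comp (Q.comp T) := by
    intro T
    rw [← ContinuousLinearMap.comp_assoc, ← ContinuousLinearMap.comp_assoc,
      ← ContinuousLinearMap.add_comp, hdecomp, ContinuousLinearMap.id_comp]
  -- block entries
  set A : V →L[ℂ] V := P.comp (a.comp i0) with hA
  set B : Vᗮ →L[ℂ] V := P.comp (a.comp i1) with hB
  set C : V →L[ℂ] Vᗮ := Q.comp (a.comp i0) with hC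
  set D : Vᗮ →L[ℂ] Vᗮ := Q.comp (a.comp i1) with hD
  set B' : Vᗮ →L[ℂ] V := P.comp (ainv.comp i1) with hB'
  set C' : V →L[ℂ] Vᗮ := Q.comp (ainv.comp i0) with hC'
  set D' : Vᗮ →L[ℂ] Vᗮ := Q.comp (ainv.comp i1) with hD'
  have expand : ∀ (R : H →L[ℂ] Vᗮ) (S T : H →L[ℂ] H) (u : Vᗮ →L[ℂ] H),
      R.comp (S.comp ((i0.comp (P.comp T) + i1.comp (Q.comp T)).comp u))
      = (R.comp (S.comp i0)).comp ((P.comp T).comp u)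
        + (R.comp (S.comp i1)).comp ((Q.comp T).comp u) := by
    intro R S T u
    rw [ContinuousLinearMap.add_comp, ContinuousLinearMap.comp_add,
      ContinuousLinearMap.comp_add]
    congr 1 <;>
      simp only [ContinuousLinearMap.comp_assoc]
  have expandP : ∀ (R : H →L[ℂ] V) (S T : H →L[ℂ] H) (u : Vᗮ →L[ℂ] H),
      R.comp (S.comp ((i0.comp (P.comp T) + i1.comp (Q.comp T)).comp u))
      = (R.comp (S.comp i0)).comp ((P.comp T).comp u)
        + (R.comp (S.comp i1)).comp ((Q.comp T).comp u) := by
    intro R S T u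
    rw [ContinuousLinearMap.add_comp, ContinuousLinearMap.comp_add,
      ContinuousLinearMap.comp_add]
    congr 1 <;>
      simp only [ContinuousLinearMap.comp_assoc]
  -- e1 : C B' + D D' = 1
  have e1 : C.comp B' + D.comp D' = ContinuousLinearMap.id ℂ Vᗮ := by
    have h0 : Q.comp ((a.comp ainv).comp i1) = ContinuousLinearMap.id ℂ Vᗮ := by
      rw [ha₁, ContinuousLinearMap.id_comp, hQi1]
    calc C.comp B' + D.comp D'
        = (Q.comp (a.comp i0)).comp ((P.comp ainv).comp i1)
          + (Q.comp (a.comp i1)).comp ((Q.comp ainv).comp i1) := by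
          rw [hC, hD, hB', hD']
          simp only [ContinuousLinearMap.comp_assoc]
      _ = Q.comp (a.comp ((i0.comp (P.comp ainv) + i1.comp (Q.comp ainv)).comp i1)) :=
          (expand Q a ainv i1).symm
      _ = Q.comp ((a.comp ainv).comp i1) := by
          rw [← hsplit ainv, ContinuousLinearMap.comp_assoc]
      _ = ContinuousLinearMap.id ℂ Vᗮ := h0
  have e2 : A.comp B' + B.comp D' = 0 := by
    have h0 : P.comp ((a.comp ainv).comp i1) = 0 := by
      rw [ha₁, ContinuousLinearMap.id_comp, hPi1]
    calc A.comp B' + B.comp D'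
        = (P.comp (a.comp i0)).comp ((P.comp ainv).comp i1)
          + (P.comp (a.comp i1)).comp ((Q.comp ainv).comp i1) := by
          rw [hA, hB, hB', hD']
          simp only [ContinuousLinearMap.comp_assoc]
      _ = P.comp (a.comp ((i0.comp (P.comp ainv) + i1.comp (Q.comp ainv)).comp i1)) :=
          (expandP P a ainv i1).symm
      _ = P.comp ((a.comp ainv).comp i1) := by
          rw [← hsplit ainv, ContinuousLinearMap.comp_assoc]
      _ = 0 := h0
  have e3 : C'.comp B + D'.comp D = ContinuousLinearMap.id ℂ Vᗮ := by
    have h0 : Q.comp ((ainv.comp a).comp i1) = ContinuousLinearMap.id ℂ Vᗮ := by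
      rw [ha₂, ContinuousLinearMap.id_comp, hQi1]
    calc C'.comp B + D'.comp D
        = (Q.comp (ainv.comp i0)).comp ((P.comp a).comp i1)
          + (Q.comp (ainv.comp i1)).comp ((Q.comp a).comp i1) := by
          rw [hB, hC', hD, hD']
          simp only [ContinuousLinearMap.comp_assoc]
      _ = Q.comp (ainv.comp ((i0.comp (P.comp a) + i1.comp (Q.comp a)).comp i1)) :=
          (expand Q ainv a i1).symm
      _ = Q.comp ((ainv.comp a).comp i1) := by
          rw [← hsplit a, ContinuousLinearMap.comp_assoc]
      _ = ContinuousLinearMap.id ℂ Vᗮ := h0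
  have e4 : C'.comp A + D'.comp C = 0 := by
    have h0 : Q.comp ((ainv.comp a).comp i0) = 0 := by
      rw [ha₂, ContinuousLinearMap.id_comp, hQi0]
    have expand0 : Q.comp (ainv.comp ((i0.comp (P.comp a) + i1.comp (Q.comp a)).comp i0))
        = (Q.comp (ainv.comp i0)).comp ((P.comp a).comp i0)
          + (Q.comp (ainv.comp i1)).comp ((Q.comp a).comp i0) := by
      rw [ContinuousLinearMap.add_comp, ContinuousLinearMap.comp_add,
        ContinuousLinearMap.comp_add]
      congr 1 <;>
        simp only [ContinuousLinearMap.comp_assoc]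
    calc C'.comp A + D'.comp C
        = (Q.comp (ainv.comp i0)).comp ((P.comp a).comp i0)
          + (Q.comp (ainv.comp i1)).comp ((Q.comp a).comp i0) := by
          rw [hA, hC, hC', hD']
          simp only [ContinuousLinearMap.comp_assoc]
      _ = Q.comp (ainv.comp ((i0.comp (P.comp a) + i1.comp (Q.comp a)).comp i0)) :=
          expand0.symm
      _ = Q.comp ((ainv.comp a).comp i0) := by
          rw [← hsplit a, ContinuousLinearMap.comp_assoc]
      _ = 0 := h0
  exact schur_aux A B C D B' C' D' b hb₁ hb₂ e1 e2 e3 e4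
end

section
/- Let E ⊆ ℂ be open, let H and K be separable complex Hilbert spaces, and let (M_n)_n be a sequence of functions M_n : E → B(H,K) such that (i) for each n and all φ ∈ H, ψ ∈ K the function z ↦ ⟨ψ, M_n(z) φ⟩ is analytic on E, and (ii) for every compact set L ⊆ E one has sup_n sup_{z ∈ L} ‖M_n(z)‖ < ∞. Then there exist a function M : E → B(H,K) and a strictly monotone map κ : ℕ → ℕ such that for all φ ∈ H, ψ ∈ K the function z ↦ ⟨ψ, M(z) φ⟩ is analytic on E and ⟨ψ, M_{κ(n)}(z) φ⟩ → ⟨ψ, M(z) φ⟩ as n → ∞ uniformly in z on every compact subset of E. -/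
open Filter
open Metric Topology

private lemma aux_lip_stmt10 {E : Set ℂ} (hE : IsOpen E) {f : ℂ → ℂ}
    (hf : DifferentiableOn ℂ f E)
    {z₀ : ℂ} {r C : ℝ} (hr : 0 < r) (hsub : closedBall z₀ (2*r) ⊆ E)
    (hC : ∀ z ∈ closedBall z₀ (2*r), ‖f z‖ ≤ C) :
    ∀ z ∈ closedBall z₀ r, ∀ w ∈ closedBall z₀ r, ‖f z - f w‖ ≤ (C/r) * ‖z - w‖ := by
  have hball : ∀ x ∈ closedBall z₀ r, closedBall x r ⊆ closedBall z₀ (2*r) := by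
    intro x hx y hy
    have h1 := dist_triangle y x z₀
    simp only [mem_closedBall] at *
    linarith
  have hdiff : ∀ x ∈ closedBall z₀ r, DifferentiableAt ℂ f x := fun x hx =>
    hf.differentiableAt (hE.mem_nhds (hsub (hball x hx (mem_closedBall_self hr.le))))
  have hderiv : ∀ x ∈ closedBall z₀ r, ‖deriv f x‖ ≤ C / r := by
    intro x hx
    have hd : DifferentiableOn ℂ f (closure (ball x r)) := by
      rw [closure_ball x hr.ne']
      exact hf.mono (fun y hy => hsub (hball x hx hy))
    exact Complex.norm_deriv_le_of_forall_mem_sphere_norm_le hr hd.diffContOnCl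
      (fun z hz => hC z (hball x hx (sphere_subset_closedBall hz)))
  intro z hz w hw
  exact (convex_closedBall z₀ r).norm_image_sub_le_of_norm_deriv_le hdiff hderiv hw hz

private lemma aux_ucauchy_stmt10 {E : Set ℂ} (hE : IsOpen E) (f : ℕ → ℂ → ℂ)
    (hf : ∀ n, DifferentiableOn ℂ (f n) E)
    (hbd : ∀ L : Set ℂ, IsCompact L → L ⊆ E → ∃ C : ℝ, ∀ n, ∀ z ∈ L, ‖f n z‖ ≤ C)
    {S : Set ℂ} (hSd : E ⊆ closure S)
    (hconv : ∀ s ∈ S, CauchySeq (fun n => f n s))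
    {L : Set ℂ} (hL : IsCompact L) (hLE : L ⊆ E) :
    UniformCauchySeqOn f atTop L := by
  rw [Metric.uniformCauchySeqOn_iff]
  intro ε hε
  -- local oscillation control
  have hloc : ∀ z₀ ∈ L, ∃ ρ > 0, ∀ n, ∀ z ∈ ball z₀ ρ, ∀ w ∈ ball z₀ ρ,
      ‖f n z - f n w‖ ≤ ε/3 := by
    intro z₀ hz₀
    obtain ⟨δ, hδpos, hδsub⟩ := Metric.nhds_basis_closedBall.mem_iff.mp
      (hE.mem_nhds (hLE hz₀))
    set r : ℝ := δ/2 with hrdef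
    have hrpos : 0 < r := by positivity
    have h2r : closedBall z₀ (2*r) ⊆ E := by
      rw [show (2:ℝ)*r = δ by rw [hrdef]; ring]; exact hδsub
    obtain ⟨C, hC⟩ := hbd (closedBall z₀ (2*r)) (isCompact_closedBall _ _) h2r
    set C' : ℝ := max C 0 with hC'def
    have hC'0 : 0 ≤ C' := le_max_right _ _
    have hlip : ∀ n, ∀ z ∈ closedBall z₀ r, ∀ w ∈ closedBall z₀ r,
        ‖f n z - f n w‖ ≤ (C'/r) * ‖z - w‖ := fun n =>
      aux_lip_stmt10 hE (hf n) hrpos h2r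
        (fun z hz => le_trans (hC n z hz) (le_max_left _ _))
    set A : ℝ := C'/r with hAdef
    have hA0 : 0 ≤ A := div_nonneg hC'0 hrpos.le
    refine ⟨min r (ε/(6*(A+1))), lt_min hrpos (by positivity), ?_⟩
    intro n z hz w hw
    have hzr : z ∈ closedBall z₀ r := mem_closedBall.mpr
      (le_trans (mem_ball.mp hz).le (min_le_left _ _))
    have hwr : w ∈ closedBall z₀ r := mem_closedBall.mpr
      (le_trans (mem_ball.mp hw).le (min_le_left _ _))
    have hzw : ‖z - w‖ ≤ 2 * (ε/(6*(A+1))) := by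
      have h1 : dist z w ≤ dist z z₀ + dist z₀ w := dist_triangle _ _ _
      have h2 : dist z z₀ < min r (ε/(6*(A+1))) := mem_ball.mp hz
      have h3 : dist z₀ w < min r (ε/(6*(A+1))) := by
        rw [dist_comm]; exact mem_ball.mp hw
      have h4 : min r (ε/(6*(A+1))) ≤ ε/(6*(A+1)) := min_le_right _ _
      rw [← dist_eq_norm]
      linarith
    calc ‖f n z - f n w‖ ≤ A * ‖z - w‖ := hlip n z hzr w hwr
      _ ≤ A * (2 * (ε/(6*(A+1)))) := mul_le_mul_of_nonneg_left hzw hA0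
      _ ≤ ε/3 := by
          rw [show A * (2 * (ε / (6 * (A + 1)))) = (A/(A+1)) * (ε/3) from by
            field_simp; ring]
          exact mul_le_of_le_one_left (by positivity)
            ((div_le_one (by positivity)).mpr (by linarith))
  -- finite subcover
  choose! ρ hρpos hρ using hloc
  have hcover : L ⊆ ⋃ z₀ ∈ L, ball z₀ (ρ z₀) := fun z hz =>
    Set.mem_biUnion hz (mem_ball_self (hρpos z hz))
  obtain ⟨b, hbL, hbfin, hbcov⟩ := hL.elim_finite_subcover_image
    (fun i _ => isOpen_ball) hcover
  have hpt : ∀ i ∈ b, ∃ s, s ∈ S ∧ s ∈ ball i (ρ i) := by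
    intro i hi
    have hiL : i ∈ L := hbL hi
    obtain ⟨s, hs1, hs2⟩ := _root_.mem_closure_iff.mp (hSd (hLE hiL))
      (ball i (ρ i)) isOpen_ball (mem_ball_self (hρpos i hiL))
    exact ⟨s, hs2, hs1⟩
  choose! pt hptS hptball using hpt
  have hNex : ∀ i ∈ b, ∃ N : ℕ, ∀ m ≥ N, ∀ n ≥ N,
      dist (f m (pt i)) (f n (pt i)) < ε/3 := by
    intro i hi
    exact Metric.cauchySeq_iff.mp (hconv (pt i) (hptS i hi)) (ε/3) (by linarith)
  choose! N hN using hNex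
  refine ⟨hbfin.toFinset.sup N, ?_⟩
  intro m hm n hn x hx
  obtain ⟨i, hi, hxball⟩ := Set.mem_iUnion₂.mp (hbcov hx)
  have hiL : i ∈ L := hbL hi
  have hNi : N i ≤ hbfin.toFinset.sup N := Finset.le_sup (hbfin.mem_toFinset.mpr hi)
  have h1 : dist (f m x) (f m (pt i)) ≤ ε/3 := by
    rw [dist_eq_norm]
    exact hρ i hiL m x hxball (pt i) (hptball i hi)
  have h2 : dist (f m (pt i)) (f n (pt i)) < ε/3 :=
    hN i hi m (le_trans hNi hm) n (le_trans hNi hn)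
  have h3 : dist (f n (pt i)) (f n x) ≤ ε/3 := by
    rw [dist_eq_norm]
    exact hρ i hiL n (pt i) (hptball i hi) x hxball
  calc dist (f m x) (f n x)
      ≤ dist (f m x) (f m (pt i)) + dist (f m (pt i)) (f n (pt i))
        + dist (f n (pt i)) (f n x) := dist_triangle4 _ _ _ _
    _ < ε := by linarith

private lemma aux_dense_cauchy_stmt10 {H K : Type*}
    [NormedAddCommGroup H] [InnerProductSpace ℂ H]
    [NormedAddCommGroup K] [InnerProductSpace ℂ K]
    (T : ℕ → H →L[ℂ] K) {C : ℝ} (hC : ∀ n, ‖T n‖ ≤ C)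
    {dH : ℕ → H} (hdH : DenseRange dH) {dK : ℕ → K} (hdK : DenseRange dK)
    (hconv : ∀ i j, CauchySeq (fun n => (inner ℂ (dK j) (T n (dH i)) : ℂ))) :
    ∀ (φ : H) (ψ : K), CauchySeq (fun n => (inner ℂ ψ (T n φ) : ℂ)) := by
  intro φ ψ
  rw [Metric.cauchySeq_iff]
  intro ε hε
  set C' : ℝ := max C 0 with hC'def
  have hC'0 : 0 ≤ C' := le_max_right _ _
  have hC' : ∀ n, ‖T n‖ ≤ C' := fun n => le_trans (hC n) (le_max_left _ _)
  obtain ⟨j, hj⟩ := Metric.denseRange_iff.mp hdK ψ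
    (min 1 (ε/(5*(C'+1)*(‖φ‖+1)))) (lt_min one_pos (by positivity))
  obtain ⟨i, hi⟩ := Metric.denseRange_iff.mp hdH φ
    (ε/(5*(C'+1)*(‖ψ‖+2))) (by positivity)
  have hjn : ‖ψ - dK j‖ ≤ ε/(5*(C'+1)*(‖φ‖+1)) := by
    rw [← dist_eq_norm]; exact le_trans hj.le (min_le_right _ _)
  have hj1 : ‖dK j‖ ≤ ‖ψ‖ + 1 := by
    have h1 : ‖dK j‖ ≤ ‖ψ‖ + ‖ψ - dK j‖ := norm_le_insert ψ (dK j)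
    have h3 : ‖ψ - dK j‖ ≤ 1 := by
      rw [← dist_eq_norm]; exact le_trans hj.le (min_le_left _ _)
    linarith
  have hin : ‖φ - dH i‖ ≤ ε/(5*(C'+1)*(‖ψ‖+2)) := by
    rw [← dist_eq_norm]; exact hi.le
  have key : ∀ n, ‖(inner ℂ ψ (T n φ) : ℂ) - inner ℂ (dK j) (T n (dH i))‖ ≤ 2*ε/5 := by
    intro n
    have hsplit : (inner ℂ ψ (T n φ) : ℂ) - inner ℂ (dK j) (T n (dH i))
        = inner ℂ (ψ - dK j) (T n φ) + inner ℂ (dK j) (T n (φ - dH i)) := by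
      rw [inner_sub_left, map_sub, inner_sub_right]; ring
    rw [hsplit]
    have hb1 : ‖(inner ℂ (ψ - dK j) (T n φ) : ℂ)‖ ≤ ‖ψ - dK j‖ * (C' * ‖φ‖) :=
      le_trans (norm_inner_le_norm _ _)
        (mul_le_mul_of_nonneg_left ((T n).le_opNorm φ |>.trans
          (mul_le_mul_of_nonneg_right (hC' n) (norm_nonneg _))) (norm_nonneg _))
    have hb2 : ‖(inner ℂ (dK j) (T n (φ - dH i)) : ℂ)‖ ≤ ‖dK j‖ * (C' * ‖φ - dH i‖) :=
      le_trans (norm_inner_le_norm _ _)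
        (mul_le_mul_of_nonneg_left ((T n).le_opNorm _ |>.trans
          (mul_le_mul_of_nonneg_right (hC' n) (norm_nonneg _))) (norm_nonneg _))
    have e1 : ‖ψ - dK j‖ * (C' * ‖φ‖) ≤ ε/5 := by
      calc ‖ψ - dK j‖ * (C' * ‖φ‖)
          ≤ (ε/(5*(C'+1)*(‖φ‖+1))) * ((C'+1) * (‖φ‖+1)) := by
            apply mul_le_mul hjn _ (by positivity) (by positivity)
            apply mul_le_mul (by linarith) (by linarith) (norm_nonneg _) (by positivity)
        _ = ε/5 := by field_simp
    have e2 : ‖dK j‖ * (C' * ‖φ - dH i‖) ≤ ε/5 := by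
      calc ‖dK j‖ * (C' * ‖φ - dH i‖)
          ≤ (‖ψ‖+1) * ((C'+1) * (ε/(5*(C'+1)*(‖ψ‖+2)))) := by
            apply mul_le_mul hj1 _ (by positivity) (by positivity)
            apply mul_le_mul (by linarith) hin (norm_nonneg _) (by positivity)
        _ ≤ (‖ψ‖+2) * ((C'+1) * (ε/(5*(C'+1)*(‖ψ‖+2)))) :=
            mul_le_mul_of_nonneg_right (by linarith) (by positivity)
        _ = ε/5 := by field_simp
    calc ‖(inner ℂ (ψ - dK j) (T n φ) : ℂ) + inner ℂ (dK j) (T n (φ - dH i))‖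
        ≤ ‖(inner ℂ (ψ - dK j) (T n φ) : ℂ)‖ + ‖(inner ℂ (dK j) (T n (φ - dH i)) : ℂ)‖ :=
          norm_add_le _ _
      _ ≤ 2*ε/5 := by linarith
  obtain ⟨N, hN⟩ := Metric.cauchySeq_iff.mp (hconv i j) (ε/5) (by linarith)
  refine ⟨N, ?_⟩
  intro m hm n hn
  have h1 : dist (inner ℂ ψ (T m φ) : ℂ) (inner ℂ (dK j) (T m (dH i)) : ℂ) ≤ 2*ε/5 := by
    rw [dist_eq_norm]; exact key m
  have h2 := hN m hm n hn
  have h3 : dist (inner ℂ (dK j) (T n (dH i)) : ℂ) (inner ℂ ψ (T n φ) : ℂ) ≤ 2*ε/5 := by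
    rw [dist_comm, dist_eq_norm]; exact key n
  calc dist (inner ℂ ψ (T m φ) : ℂ) (inner ℂ ψ (T n φ) : ℂ)
      ≤ _ + _ + _ := dist_triangle4 _ (inner ℂ (dK j) (T m (dH i)) : ℂ)
        (inner ℂ (dK j) (T n (dH i)) : ℂ) _
    _ < ε := by linarith

private lemma aux_weak_limit_stmt10 {H K : Type*}
    [NormedAddCommGroup H] [InnerProductSpace ℂ H]
    [NormedAddCommGroup K] [InnerProductSpace ℂ K] [CompleteSpace K]
    (T : ℕ → H →L[ℂ] K) {C : ℝ} (hC0 : 0 ≤ C) (hC : ∀ n, ‖T n‖ ≤ C)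
    (hcauchy : ∀ (φ : H) (ψ : K), CauchySeq (fun n => (inner ℂ ψ (T n φ) : ℂ))) :
    ∃ Tl : H →L[ℂ] K, ∀ (φ : H) (ψ : K),
      Tendsto (fun n => (inner ℂ ψ (T n φ) : ℂ)) atTop (𝓝 (inner ℂ ψ (Tl φ))) := by
  have hex : ∀ (φ : H) (ψ : K), ∃ l : ℂ,
      Tendsto (fun n => (inner ℂ ψ (T n φ) : ℂ)) atTop (𝓝 l) :=
    fun φ ψ => cauchySeq_tendsto_of_complete (hcauchy φ ψ)
  choose a ha using hex
  have habd : ∀ (φ : H) (ψ : K), ‖a φ ψ‖ ≤ C * ‖φ‖ * ‖ψ‖ := by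
    intro φ ψ
    refine le_of_tendsto (ha φ ψ).norm (Eventually.of_forall fun n => ?_)
    calc ‖(inner ℂ ψ (T n φ) : ℂ)‖ ≤ ‖ψ‖ * ‖T n φ‖ := norm_inner_le_norm _ _
      _ ≤ ‖ψ‖ * (C * ‖φ‖) := by
          apply mul_le_mul_of_nonneg_left _ (norm_nonneg _)
          exact ((T n).le_opNorm φ).trans
            (mul_le_mul_of_nonneg_right (hC n) (norm_nonneg _))
      _ = C * ‖φ‖ * ‖ψ‖ := by ring
  have haddψ : ∀ φ ψ ψ', a φ (ψ + ψ') = a φ ψ + a φ ψ' := by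
    intro φ ψ ψ'
    refine tendsto_nhds_unique (ha φ (ψ + ψ')) ?_
    have := (ha φ ψ).add (ha φ ψ')
    simpa [inner_add_left] using this
  have hsmulψ : ∀ (c : ℂ) φ ψ, a φ (c • ψ) = (starRingEnd ℂ) c * a φ ψ := by
    intro c φ ψ
    refine tendsto_nhds_unique (ha φ (c • ψ)) ?_
    have := (ha φ ψ).const_mul ((starRingEnd ℂ) c)
    simpa [inner_smul_left, mul_comm] using this
  have haddφ : ∀ φ φ' ψ, a (φ + φ') ψ = a φ ψ + a φ' ψ := by
    intro φ φ' ψ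
    refine tendsto_nhds_unique (ha (φ + φ') ψ) ?_
    have := (ha φ ψ).add (ha φ' ψ)
    simpa [inner_add_right] using this
  have hsmulφ : ∀ (c : ℂ) φ ψ, a (c • φ) ψ = c * a φ ψ := by
    intro c φ ψ
    refine tendsto_nhds_unique (ha (c • φ) ψ) ?_
    have := (ha φ ψ).const_mul c
    simpa [inner_smul_right] using this
  have hlf : ∀ φ : H, ∃ v : K, ∀ ψ : K, (inner ℂ ψ v : ℂ) = a φ ψ := by
    intro φ
    let lf : K →ₗ[ℂ] ℂ :=
      { toFun := fun ψ => (starRingEnd ℂ) (a φ ψ)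
        map_add' := fun ψ ψ' => by simp [haddψ]
        map_smul' := fun c ψ => by simp [hsmulψ] }
    have hlfb : ∀ ψ, ‖lf ψ‖ ≤ (C * ‖φ‖) * ‖ψ‖ := by
      intro ψ
      simpa [lf, mul_assoc] using habd φ ψ
    let lfC : K →L[ℂ] ℂ := LinearMap.mkContinuous lf (C * ‖φ‖) hlfb
    refine ⟨(InnerProductSpace.toDual ℂ K).symm lfC, fun ψ => ?_⟩
    have h1 : (inner ℂ ((InnerProductSpace.toDual ℂ K).symm lfC) ψ : ℂ) = lfC ψ :=
      InnerProductSpace.toDual_symm_apply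
    calc (inner ℂ ψ ((InnerProductSpace.toDual ℂ K).symm lfC) : ℂ)
        = (starRingEnd ℂ) (inner ℂ ((InnerProductSpace.toDual ℂ K).symm lfC) ψ : ℂ) :=
          (inner_conj_symm _ _).symm
      _ = (starRingEnd ℂ) (lfC ψ) := by rw [h1]
      _ = a φ ψ := by simp [lfC, lf, LinearMap.mkContinuous_apply]
  choose v hv using hlf
  have hvadd : ∀ φ φ', v (φ + φ') = v φ + v φ' := by
    intro φ φ'
    refine ext_inner_left ℂ fun ψ => ?_
    rw [hv, inner_add_right, hv, hv, haddφ]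
  have hvsmul : ∀ (c : ℂ) φ, v (c • φ) = c • v φ := by
    intro c φ
    refine ext_inner_left ℂ fun ψ => ?_
    rw [hv, inner_smul_right, hv, hsmulφ]
  have hvbd : ∀ φ, ‖v φ‖ ≤ C * ‖φ‖ := by
    intro φ
    rcases eq_or_lt_of_le (norm_nonneg (v φ)) with h | h
    · rw [← h]; positivity
    · have h2 : (inner ℂ (v φ) (v φ) : ℂ) = a φ (v φ) := hv φ (v φ)
      have h3 : ‖(inner ℂ (v φ) (v φ) : ℂ)‖ = ‖v φ‖ * ‖v φ‖ := by
        rw [inner_self_eq_norm_sq_to_K]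
        simp [sq, Complex.norm_real]
      have h1 : ‖v φ‖ * ‖v φ‖ ≤ (C * ‖φ‖) * ‖v φ‖ := by
        calc ‖v φ‖ * ‖v φ‖ = ‖(inner ℂ (v φ) (v φ) : ℂ)‖ := h3.symm
          _ = ‖a φ (v φ)‖ := by rw [h2]
          _ ≤ C * ‖φ‖ * ‖v φ‖ := habd φ (v φ)
      exact le_of_mul_le_mul_right h1 h
  let Tl : H →L[ℂ] K := LinearMap.mkContinuous
    { toFun := v, map_add' := hvadd, map_smul' := hvsmul } C hvbd
  refine ⟨Tl, fun φ ψ => ?_⟩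
  have h0 : (inner ℂ ψ (Tl φ) : ℂ) = a φ ψ := hv φ ψ
  rw [h0]
  exact ha φ ψ

/-- Compactness in the material law topology `𝓗_w(E; B(H,K))`: a sequence of
`B(H,K)`-valued maps on an open set `E ⊆ ℂ`, analytic in the weak sense and locally uniformly
norm-bounded, has a subsequence converging — weakly in operator pairings, locally uniformly
on `E` — to a weakly analytic limit. -/
theorem stmt_10
    {H K : Type*} [NormedAddCommGroup H] [InnerProductSpace ℂ H] [CompleteSpace H]
    [NormedAddCommGroup K] [InnerProductSpace ℂ K] [CompleteSpace K]
    [TopologicalSpace.SeparableSpace H] [TopologicalSpace.SeparableSpace K]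
    (E : Set ℂ) (hE : IsOpen E)
    (M : ℕ → ℂ → (H →L[ℂ] K))
    (hanal : ∀ (n : ℕ) (φ : H) (ψ : K),
      DifferentiableOn ℂ (fun z => (inner ℂ ψ (M n z φ) : ℂ)) E)
    (hbd : ∀ L : Set ℂ, IsCompact L → L ⊆ E →
      ∃ Cb : ℝ, ∀ (n : ℕ), ∀ z ∈ L, ‖M n z‖ ≤ Cb) :
    ∃ (Mlim : ℂ → (H →L[ℂ] K)) (κ : ℕ → ℕ), StrictMono κ ∧
      ∀ (φ : H) (ψ : K),
        DifferentiableOn ℂ (fun z => (inner ℂ ψ (Mlim z φ) : ℂ)) E ∧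
        ∀ L : Set ℂ, IsCompact L → L ⊆ E →
          TendstoUniformlyOn (fun (n : ℕ) (z : ℂ) => (inner ℂ ψ (M (κ n) z φ) : ℂ))
            (fun z => (inner ℂ ψ (Mlim z φ) : ℂ)) atTop L := by
  classical
  by_cases hne : E.Nonempty
  case neg =>
    have hEempty : E = ∅ := Set.not_nonempty_iff_eq_empty.mp hne
    refine ⟨fun _ => 0, id, strictMono_id, fun φ ψ => ⟨?_, ?_⟩⟩
    · rw [hEempty]; exact differentiableOn_empty
    · intro L hL hLE
      rw [hEempty, Set.subset_empty_iff] at hLE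
      rw [hLE]
      exact tendstoUniformlyOn_empty
  case pos =>
  haveI : Nonempty H := ⟨0⟩
  haveI : Nonempty K := ⟨0⟩
  haveI : Nonempty ↥E := hne.to_subtype
  set dH := TopologicalSpace.denseSeq H with hdHdef
  have hdH : DenseRange dH := TopologicalSpace.denseRange_denseSeq H
  set dK := TopologicalSpace.denseSeq K with hdKdef
  have hdK : DenseRange dK := TopologicalSpace.denseRange_denseSeq K
  set e : ℕ → ℂ := fun n => (TopologicalSpace.denseSeq ↥E n : ℂ) with hedef
  have hrange : Set.range e ⊆ E := by
    rintro _ ⟨n, rfl⟩; exact (TopologicalSpace.denseSeq ↥E n).2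
  have hdense : E ⊆ closure (Set.range e) := by
    intro z hz
    have h1 : (⟨z, hz⟩ : ↥E) ∈ closure (Set.range (TopologicalSpace.denseSeq ↥E)) := by
      rw [(TopologicalSpace.denseRange_denseSeq ↥E).closure_range]; trivial
    have h3 : z ∈ Subtype.val '' closure (Set.range (TopologicalSpace.denseSeq ↥E)) :=
      ⟨_, h1, rfl⟩
    have h4 := image_closure_subset_closure_image continuous_subtype_val h3
    rwa [← Set.range_comp] at h4
  -- pointwise uniform bounds at the countable dense points
  have hC0ex : ∀ k : ℕ, ∃ C : ℝ, ∀ n, ‖M n (e k)‖ ≤ C := by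
    intro k
    obtain ⟨C, hC⟩ := hbd {e k} isCompact_singleton
      (Set.singleton_subset_iff.mpr (hrange ⟨k, rfl⟩))
    exact ⟨C, fun n => hC n (e k) rfl⟩
  choose C0 hC0 using hC0ex
  -- diagonal extraction via sequential compactness of a countable product
  set F : ℕ → (ℕ × ℕ × ℕ → ℂ) :=
    fun n p => (inner ℂ (dK p.2.1) (M n (e p.2.2) (dH p.1)) : ℂ) with hFdef
  set B : ℕ × ℕ × ℕ → ℝ := fun p => ‖dK p.2.1‖ * (C0 p.2.2 * ‖dH p.1‖) with hBdef
  have hFB : ∀ n p, ‖F n p‖ ≤ B p := by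
    intro n p
    calc ‖F n p‖ ≤ ‖dK p.2.1‖ * ‖M n (e p.2.2) (dH p.1)‖ := norm_inner_le_norm _ _
      _ ≤ ‖dK p.2.1‖ * (C0 p.2.2 * ‖dH p.1‖) := by
          apply mul_le_mul_of_nonneg_left _ (norm_nonneg _)
          exact ((M n (e p.2.2)).le_opNorm _).trans
            (mul_le_mul_of_nonneg_right (hC0 p.2.2 n) (norm_nonneg _))
  have hX : IsCompact (Set.univ.pi fun p : ℕ × ℕ × ℕ => Metric.closedBall (0:ℂ) (B p)) :=
    isCompact_univ_pi fun p => isCompact_closedBall _ _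
  have hmem : ∀ n, F n ∈ Set.univ.pi fun p => Metric.closedBall (0:ℂ) (B p) := by
    intro n
    rw [Set.mem_univ_pi]
    exact fun p => mem_closedBall_zero_iff.mpr (hFB n p)
  obtain ⟨g, -, κ, hκ, hκt⟩ := hX.isSeqCompact hmem
  have hcoord : ∀ i j k : ℕ,
      CauchySeq (fun n => (inner ℂ (dK j) (M (κ n) (e k) (dH i)) : ℂ)) := by
    intro i j k
    exact ((tendsto_pi_nhds.mp hκt (i, j, k)).comp tendsto_id).cauchySeq
  -- Cauchy at every dense point for every pair of vectors
  have hptcauchy : ∀ (k : ℕ) (φ : H) (ψ : K),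
      CauchySeq (fun n => (inner ℂ ψ (M (κ n) (e k) φ) : ℂ)) := by
    intro k
    exact aux_dense_cauchy_stmt10 (fun n => M (κ n) (e k))
      (fun n => hC0 k (κ n)) hdH hdK (fun i j => hcoord i j k)
  -- uniform Cauchy on compacts for every pair of vectors
  have hucauchy : ∀ (φ : H) (ψ : K) (L : Set ℂ), IsCompact L → L ⊆ E →
      UniformCauchySeqOn (fun n z => (inner ℂ ψ (M (κ n) z φ) : ℂ)) atTop L := by
    intro φ ψ L hL hLE
    refine aux_ucauchy_stmt10 hE _ (fun n => hanal (κ n) φ ψ) ?_ hdense ?_ hL hLE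
    · intro L' hL' hL'E
      obtain ⟨Cb, hCb⟩ := hbd L' hL' hL'E
      refine ⟨‖ψ‖ * (Cb * ‖φ‖), fun n z hz => ?_⟩
      calc ‖(inner ℂ ψ (M (κ n) z φ) : ℂ)‖ ≤ ‖ψ‖ * ‖M (κ n) z φ‖ := norm_inner_le_norm _ _
        _ ≤ ‖ψ‖ * (Cb * ‖φ‖) := by
            apply mul_le_mul_of_nonneg_left _ (norm_nonneg _)
            exact ((M (κ n) z).le_opNorm _).trans
              (mul_le_mul_of_nonneg_right (hCb (κ n) z hz) (norm_nonneg _))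
    · rintro _ ⟨k, rfl⟩
      exact hptcauchy k φ ψ
  -- Cauchy at every point of E for every pair of vectors
  have hzcauchy : ∀ z ∈ E, ∀ (φ : H) (ψ : K),
      CauchySeq (fun n => (inner ℂ ψ (M (κ n) z φ) : ℂ)) := by
    intro z hz φ ψ
    exact (hucauchy φ ψ {z} isCompact_singleton
      (Set.singleton_subset_iff.mpr hz)).cauchySeq rfl
  -- construction of the limit operator at each point
  have hop : ∀ z : ℂ, ∃ T : H →L[ℂ] K, z ∈ E → ∀ (φ : H) (ψ : K),
      Tendsto (fun n => (inner ℂ ψ (M (κ n) z φ) : ℂ)) atTop (𝓝 (inner ℂ ψ (T φ))) := by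
    intro z
    by_cases hz : z ∈ E
    · obtain ⟨Cb, hCb⟩ := hbd {z} isCompact_singleton (Set.singleton_subset_iff.mpr hz)
      obtain ⟨Tl, hTl⟩ := aux_weak_limit_stmt10 (fun n => M (κ n) z)
        (le_max_right Cb 0)
        (fun n => le_trans (hCb (κ n) z rfl) (le_max_left _ _))
        (fun φ ψ => hzcauchy z hz φ ψ)
      exact ⟨Tl, fun _ => hTl⟩
    · exact ⟨0, fun h => absurd h hz⟩
  choose Mlim hMlim using hop
  -- uniform convergence on compacts
  have huconv : ∀ (φ : H) (ψ : K) (L : Set ℂ), IsCompact L → L ⊆ E →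
      TendstoUniformlyOn (fun n z => (inner ℂ ψ (M (κ n) z φ) : ℂ))
        (fun z => (inner ℂ ψ (Mlim z φ) : ℂ)) atTop L := by
    intro φ ψ L hL hLE
    exact (hucauchy φ ψ L hL hLE).tendstoUniformlyOn_of_tendsto
      (fun z hz => hMlim z (hLE hz) φ ψ)
  refine ⟨Mlim, κ, hκ, fun φ ψ => ⟨?_, fun L hL hLE => huconv φ ψ L hL hLE⟩⟩
  have hlocal : TendstoLocallyUniformlyOn (fun n z => (inner ℂ ψ (M (κ n) z φ) : ℂ))
      (fun z => (inner ℂ ψ (Mlim z φ) : ℂ)) atTop E :=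
    (tendstoLocallyUniformlyOn_iff_forall_isCompact hE).mpr
      (fun L hLE hL => huconv φ ψ L hL hLE)
  exact hlocal.differentiableOn (Eventually.of_forall fun n => hanal (κ n) φ ψ) hE
end

section
/- Let ν ∈ ℝ and let φ : ℝ → ℂ be continuous with compact support. Define the Fourier–Laplace transform (𝓛_ν φ)(ξ) := (2π)^{-1/2} ∫_ℝ exp(−iξt − νt) φ(t) dt for ξ ∈ ℝ. Then ∫_ℝ |(𝓛_ν φ)(ξ)|² dξ = ∫_ℝ |φ(t)|² exp(−2νt) dt; in particular, 𝓛_ν is an isometry from the dense subspace of continuous compactly supported functions of the exponentially weighted space L²_ν(ℝ) into L²(ℝ), and hence extends to a unitary operator L²_ν(ℝ) → L²(ℝ). -/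
open MeasureTheory Real Complex Filter
open scoped FourierTransform Topology ComplexConjugate Convolution

lemma aux_tendsto (g : ℝ → ℂ) (hg : Integrable g) (hgc : Continuous g) :
    Tendsto (fun c : ℝ ↦ ∫ w : ℝ, Complex.exp (- c⁻¹ * ‖w‖ ^ 2) • 𝓕 g w)
      Filter.atTop (𝓝 (g 0)) := by
  have B := Real.tendsto_integral_gaussian_smul' hg (v := (0:ℝ)) hgc.continuousAt
  apply B.congr'
  filter_upwards [Ioi_mem_atTop 0] with c (hc : 0 < c)
  have hb : 0 < ((c : ℂ)⁻¹).re := by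
    rw [← Complex.ofReal_inv]
    simpa using inv_pos.2 hc
  have J : Integrable (fun w : ℝ ↦ Complex.exp (- (c:ℂ)⁻¹ * ‖w‖ ^ 2)) := by
    simpa using GaussianFourier.integrable_cexp_neg_mul_sq_norm_add hb 0 (0:ℝ)
  have hflipL : (innerₗ ℝ).flip = innerₗ ℝ :=
    LinearMap.ext₂ fun x y ↦ real_inner_comm x y
  have flip := VectorFourier.integral_fourierIntegral_smul_eq_flip (L := innerₗ ℝ)
      Real.continuous_fourierChar continuous_inner J hg
  rw [hflipL] at flip
  have hgauss : ∀ ξ : ℝ, 𝓕 (fun v : ℝ ↦ Complex.exp (- (c:ℂ)⁻¹ * ‖v‖ ^ 2)) ξ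
      = ((π : ℂ) / (c:ℂ)⁻¹) ^ (Module.finrank ℝ ℝ / 2 : ℂ)
        * Complex.exp (-(π:ℂ) ^ 2 * ‖ξ‖ ^ 2 / (c:ℂ)⁻¹) :=
    fun ξ ↦ fourier_gaussian_innerProductSpace hb ξ
  calc ∫ w : ℝ, ((π * c : ℂ) ^ (Module.finrank ℝ ℝ / 2 : ℂ)
          * Complex.exp (-(π:ℂ) ^ 2 * c * ‖(0:ℝ) - w‖ ^ 2)) • g w
      = ∫ w : ℝ, (𝓕 (fun v : ℝ ↦ Complex.exp (- (c:ℂ)⁻¹ * ‖v‖ ^ 2)) w) • g w := by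
        congr 1 with w
        rw [hgauss w]
        have hc0 : (c : ℂ) ≠ 0 := by exact_mod_cast hc.ne'
        rw [zero_sub, norm_neg]
        congr 2
        · congr 1
          field_simp
        · congr 1
          field_simp
    _ = ∫ w : ℝ, Complex.exp (- c⁻¹ * ‖w‖ ^ 2) • 𝓕 g w := by
        simp at flip ⊢; exact flip

set_option maxHeartbeats 1000000 in
lemma plancherel_cc (ψ : ℝ → ℂ) (hψ : Continuous ψ) (hψc : HasCompactSupport ψ) :
    ∫ ξ : ℝ, ‖𝓕 ψ ξ‖ ^ 2 = ∫ t : ℝ, ‖ψ t‖ ^ 2 := by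
  have hψint : Integrable ψ := hψ.integrable_of_hasCompactSupport hψc
  have key : ∃ g : ℝ → ℂ, Continuous g ∧ Integrable g ∧
      (∀ ξ, 𝓕 g ξ = ((‖𝓕 ψ ξ‖ ^ 2 : ℝ) : ℂ)) ∧ g 0 = ∫ t, ((‖ψ t‖ ^ 2 : ℝ) : ℂ) := by
    set ψt : ℝ → ℂ := fun u ↦ conj (ψ (-u)) with hψt_def
    have hψt : Continuous ψt := (hψ.comp continuous_neg).star
    have hψtc : HasCompactSupport ψt :=
      (hψc.comp_homeomorph (Homeomorph.neg ℝ)).comp_left (map_zero (starRingEnd ℂ))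
    set g : ℝ → ℂ := ψ ⋆[ContinuousLinearMap.mul ℂ ℂ] ψt with hg_def
    have hgc : Continuous g := hψtc.continuous_convolution_right _ hψ.locallyIntegrable hψt
    have hgsupp : HasCompactSupport g := HasCompactSupport.convolution (L := ContinuousLinearMap.mul ℂ ℂ) hψc hψtc
    have hgint : Integrable g := hgc.integrable_of_hasCompactSupport hgsupp
    have conv_eq : ∀ x, g x = ∫ t, ψ t * ψt (x - t) := by
      intro x
      simp [hg_def, convolution_def]
    have key2 : g 0 = ∫ t, ((‖ψ t‖ ^ 2 : ℝ) : ℂ) := by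
      rw [conv_eq]
      congr 1 with t
      simp [hψt_def, Complex.mul_conj, Complex.normSq_eq_norm_sq]
    refine ⟨g, hgc, hgint, fun ξ ↦ ?_, key2⟩
    have hconj : 𝓕 ψt ξ = conj (𝓕 ψ ξ) := by
      rw [Real.fourier_real_eq_integral_exp_smul, Real.fourier_real_eq_integral_exp_smul,
        ← integral_conj, ← integral_neg_eq_self (fun v ↦ Complex.exp (↑(-2 * π * v * ξ) * I) • ψt v) volume]
      congr 1 with v
      simp only [smul_eq_mul, hψt_def, neg_neg, map_mul, map_neg, ← Complex.exp_conj,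
        Complex.conj_I, Complex.conj_ofReal]
      push_cast
      ring_nf
    have hh : HasCompactSupport (fun p : ℝ × ℝ ↦ ψ p.2 * ψt (p.1 - p.2)) := by
      apply HasCompactSupport.intro
        (K := (fun q : ℝ × ℝ ↦ (q.1 + q.2, q.2)) '' ((tsupport ψt) ×ˢ (tsupport ψ)))
        ((hψtc.prod hψc).image (by fun_prop))
      intro p hp
      by_contra hne
      apply hp
      have h1 : ψ p.2 ≠ 0 := fun h ↦ hne (by simp [h])
      have h2 : ψt (p.1 - p.2) ≠ 0 := fun h ↦ hne (by simp [h])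
      exact ⟨(p.1 - p.2, p.2), ⟨subset_tsupport _ h2, subset_tsupport _ h1⟩, by simp⟩
    have hprod_cont : Continuous
        (fun p : ℝ × ℝ ↦ Complex.exp (↑(-2 * π * p.1 * ξ) * I) * (ψ p.2 * ψt (p.1 - p.2))) := by
      fun_prop
    have hprod_supp : HasCompactSupport
        (fun p : ℝ × ℝ ↦ Complex.exp (↑(-2 * π * p.1 * ξ) * I) * (ψ p.2 * ψt (p.1 - p.2))) :=
      hh.mul_left
    have hint2 : Integrable
        (fun p : ℝ × ℝ ↦ Complex.exp (↑(-2 * π * p.1 * ξ) * I) * (ψ p.2 * ψt (p.1 - p.2)))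
        (volume.prod volume) := by
      rw [← MeasureTheory.Measure.volume_eq_prod]
      exact hprod_cont.integrable_of_hasCompactSupport hprod_supp
    have key1 : 𝓕 g ξ = ((‖𝓕 ψ ξ‖ ^ 2 : ℝ) : ℂ) := by
      have expadd : ∀ x t : ℝ, Complex.exp (↑(-2 * π * (x + t) * ξ) * I)
          = Complex.exp (↑(-2 * π * t * ξ) * I) * Complex.exp (↑(-2 * π * x * ξ) * I) := by
        intro x t
        rw [← Complex.exp_add]
        congr 1
        push_cast
        ring
      calc 𝓕 g ξ = ∫ x, Complex.exp (↑(-2 * π * x * ξ) * I) * g x := by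
            rw [Real.fourier_real_eq_integral_exp_smul]
            simp [smul_eq_mul]
        _ = ∫ x, ∫ t, Complex.exp (↑(-2 * π * x * ξ) * I) * (ψ t * ψt (x - t)) := by
            congr 1 with x
            rw [conv_eq x]
            exact (integral_const_mul _ _).symm
        _ = ∫ t, ∫ x, Complex.exp (↑(-2 * π * x * ξ) * I) * (ψ t * ψt (x - t)) :=
            integral_integral_swap hint2
        _ = ∫ t, (Complex.exp (↑(-2 * π * t * ξ) * I) * ψ t) * 𝓕 ψt ξ := by
            congr 1 with t
            calc ∫ x, Complex.exp (↑(-2 * π * x * ξ) * I) * (ψ t * ψt (x - t))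
                = ∫ x, Complex.exp (↑(-2 * π * (x + t) * ξ) * I) * (ψ t * ψt x) := by
                  rw [← integral_add_right_eq_self
                    (fun x ↦ Complex.exp (↑(-2 * π * x * ξ) * I) * (ψ t * ψt (x - t))) t]
                  simp
              _ = (Complex.exp (↑(-2 * π * t * ξ) * I) * ψ t)
                    * ∫ x, Complex.exp (↑(-2 * π * x * ξ) * I) * ψt x := by
                  rw [← integral_const_mul]
                  congr 1 with x
                  rw [expadd]
                  ring
              _ = (Complex.exp (↑(-2 * π * t * ξ) * I) * ψ t) * 𝓕 ψt ξ := by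
                  rw [Real.fourier_real_eq_integral_exp_smul]
                  simp [smul_eq_mul]
        _ = (∫ t, Complex.exp (↑(-2 * π * t * ξ) * I) * ψ t) * 𝓕 ψt ξ :=
            integral_mul_const _ _
        _ = 𝓕 ψ ξ * conj (𝓕 ψ ξ) := by
            rw [hconj, Real.fourier_real_eq_integral_exp_smul]
            simp [smul_eq_mul]
        _ = ((‖𝓕 ψ ξ‖ ^ 2 : ℝ) : ℂ) := by
            rw [Complex.mul_conj, Complex.normSq_eq_norm_sq]
    exact key1

  obtain ⟨g, hgc, hgint, key1, key2⟩ := key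
  set F : ℝ → ℝ := fun ξ ↦ ‖𝓕 ψ ξ‖ ^ 2 with hF_def
  have h𝓕cont : Continuous (𝓕 ψ) :=
    VectorFourier.fourierIntegral_continuous Real.continuous_fourierChar continuous_inner hψint
  have hFcont : Continuous F := (h𝓕cont.norm).pow 2
  have hFnonneg : ∀ ξ, 0 ≤ F ξ := fun ξ ↦ by positivity
  have hFbdd : ∃ C, ∀ ξ, ‖F ξ‖ ≤ C := by
    refine ⟨(∫ t, ‖ψ t‖) ^ 2, fun ξ ↦ ?_⟩
    rw [Real.norm_eq_abs, _root_.abs_of_nonneg (hFnonneg ξ)]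
    have := VectorFourier.norm_fourierIntegral_le_integral_norm 𝐞 volume (innerₗ ℝ) ψ ξ
    calc F ξ = ‖𝓕 ψ ξ‖ ^ 2 := rfl
      _ ≤ (∫ t, ‖ψ t‖) ^ 2 := by
          apply pow_le_pow_left₀ (norm_nonneg _) this
  have T := aux_tendsto g hgint hgc
  have hIc : ∀ c : ℝ, ((∫ w : ℝ, Real.exp (- c⁻¹ * ‖w‖ ^ 2) * F w : ℝ) : ℂ)
      = ∫ w : ℝ, Complex.exp (- c⁻¹ * ‖w‖ ^ 2) • 𝓕 g w := by
    intro c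
    refine Eq.trans (integral_ofReal (𝕜 := ℂ)).symm ?_
    show (∫ w : ℝ, ((Real.exp (- c⁻¹ * ‖w‖ ^ 2) * F w : ℝ) : ℂ)) = _
    congr 1 with w
    rw [key1 w, smul_eq_mul, Complex.ofReal_mul, Complex.ofReal_exp]
    norm_cast
  have Treal : Tendsto (fun c : ℝ ↦ ∫ w : ℝ, Real.exp (- c⁻¹ * ‖w‖ ^ 2) * F w)
      atTop (𝓝 (g 0).re) := by
    have T' : Tendsto (fun c : ℝ ↦ ((∫ w : ℝ, Real.exp (- c⁻¹ * ‖w‖ ^ 2) * F w : ℝ) : ℂ))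
        atTop (𝓝 (g 0)) := by
      simpa only [hIc] using T
    have := (Complex.continuous_re.tendsto (g 0)).comp T'
    exact this
  have hInt_c : ∀ c : ℝ, 0 < c → Integrable (fun w : ℝ ↦ Real.exp (- c⁻¹ * ‖w‖ ^ 2) * F w) := by
    intro c hc
    have hg1 : Integrable (fun w : ℝ ↦ Real.exp (- c⁻¹ * ‖w‖ ^ 2)) := by
      simpa [_root_.sq_abs] using integrable_exp_neg_mul_sq (inv_pos.2 hc)
    have := hg1.bdd_mul (c := hFbdd.choose) hFcont.aestronglyMeasurable (ae_of_all _ hFbdd.choose_spec)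
    simpa [mul_comm] using this
  have hFint : Integrable F := by
    refine ⟨hFcont.aestronglyMeasurable, ?_⟩
    rw [hasFiniteIntegral_iff_ofReal (ae_of_all _ hFnonneg)]
    have hlimseq : Tendsto (fun n : ℕ ↦ ENNReal.ofReal
        (∫ w : ℝ, Real.exp (- ((n : ℝ))⁻¹ * ‖w‖ ^ 2) * F w)) atTop
        (𝓝 (ENNReal.ofReal (g 0).re)) :=
      (ENNReal.continuous_ofReal.tendsto _).comp (Treal.comp tendsto_natCast_atTop_atTop)
    have hle : (∫⁻ ξ : ℝ, ENNReal.ofReal (F ξ)) ≤ ENNReal.ofReal (g 0).re := by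
      have hpt : ∀ ξ : ℝ, Tendsto (fun n : ℕ ↦ ENNReal.ofReal
          (Real.exp (- ((n : ℝ))⁻¹ * ‖ξ‖ ^ 2) * F ξ)) atTop (𝓝 (ENNReal.ofReal (F ξ))) := by
        intro ξ
        apply (ENNReal.continuous_ofReal.tendsto _).comp
        have h0 : Tendsto (fun n : ℕ ↦ - ((n : ℝ))⁻¹ * ‖ξ‖ ^ 2) atTop (𝓝 0) := by
          have h := ((tendsto_inv_atTop_zero.comp
            (tendsto_natCast_atTop_atTop (R := ℝ))).neg).mul_const (‖ξ‖ ^ 2)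
          simpa only [neg_zero, zero_mul, Function.comp_def] using h
        have := ((Real.continuous_exp.tendsto 0).comp h0).mul_const (F ξ)
        simpa using this
      calc (∫⁻ ξ : ℝ, ENNReal.ofReal (F ξ))
          = ∫⁻ ξ : ℝ, liminf (fun n : ℕ ↦ ENNReal.ofReal
              (Real.exp (- ((n : ℝ))⁻¹ * ‖ξ‖ ^ 2) * F ξ)) atTop :=
            lintegral_congr fun ξ ↦ ((hpt ξ).liminf_eq).symm
        _ ≤ liminf (fun n : ℕ ↦ ∫⁻ ξ : ℝ, ENNReal.ofReal
              (Real.exp (- ((n : ℝ))⁻¹ * ‖ξ‖ ^ 2) * F ξ)) atTop := by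
            apply lintegral_liminf_le
            intro n
            apply ENNReal.measurable_ofReal.comp
            exact (((Real.continuous_exp.comp (by fun_prop)).mul hFcont)).measurable
        _ = liminf (fun n : ℕ ↦ ENNReal.ofReal
              (∫ w : ℝ, Real.exp (- ((n : ℝ))⁻¹ * ‖w‖ ^ 2) * F w)) atTop := by
            apply Filter.liminf_congr
            filter_upwards [Filter.eventually_gt_atTop 0] with n hn
            rw [← ofReal_integral_eq_lintegral_ofReal
              (hInt_c _ (by exact_mod_cast Nat.cast_pos.mpr hn))
              (ae_of_all _ fun w ↦ mul_nonneg (Real.exp_nonneg _) (hFnonneg w))]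
        _ = ENNReal.ofReal (g 0).re := hlimseq.liminf_eq
    exact lt_of_le_of_lt hle ENNReal.ofReal_lt_top
  have h𝓕g_int : Integrable (𝓕 g) :=
    (hFint.ofReal (𝕜 := ℂ)).congr (ae_of_all _ fun ξ ↦ (key1 ξ).symm)
  have T2 := Real.tendsto_integral_cexp_sq_smul h𝓕g_int
  have hlim : (∫ w : ℝ, 𝓕 g w) = g 0 := tendsto_nhds_unique T2 T
  have final : ((∫ ξ : ℝ, F ξ : ℝ) : ℂ) = ((∫ t : ℝ, ‖ψ t‖ ^ 2 : ℝ) : ℂ) := by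
    calc ((∫ ξ : ℝ, F ξ : ℝ) : ℂ) = ∫ ξ : ℝ, ((F ξ : ℝ) : ℂ) := (integral_ofReal (𝕜 := ℂ)).symm
      _ = ∫ w : ℝ, 𝓕 g w := integral_congr_ae (ae_of_all _ fun ξ ↦ (key1 ξ).symm)
      _ = g 0 := hlim
      _ = ∫ t : ℝ, ((‖ψ t‖ ^ 2 : ℝ) : ℂ) := key2
      _ = ((∫ t : ℝ, ‖ψ t‖ ^ 2 : ℝ) : ℂ) := integral_ofReal (𝕜 := ℂ) (f := fun t ↦ ‖ψ t‖ ^ 2)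
  exact_mod_cast final

set_option maxHeartbeats 1000000 in
/-- Plancherel identity for the Fourier–Laplace transformation: for
continuous, compactly supported `φ : ℝ → ℂ` and `ν ∈ ℝ`,
`∫ |(𝓛_ν φ)(ξ)|² dξ = ∫ |φ(t)|² exp(−2νt) dt`, where
`(𝓛_ν φ)(ξ) = (2π)^{-1/2} ∫ exp(−iξt − νt) φ(t) dt`; so `𝓛_ν` is an isometry from the
continuous compactly supported functions in `L²_ν(ℝ)` into `L²(ℝ)` and extends unitarily. -/
theorem stmt_12 (ν : ℝ) (φ : ℝ → ℂ) (hφ : Continuous φ) (hφc : HasCompactSupport φ) :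
    ∫ ξ : ℝ,
        ‖((Real.sqrt (2 * Real.pi))⁻¹ : ℂ) *
          ∫ t : ℝ, Complex.exp (-(Complex.I * (ξ : ℂ) * (t : ℂ)) - (ν : ℂ) * (t : ℂ)) * φ t‖ ^ 2
      = ∫ t : ℝ, ‖φ t‖ ^ 2 * Real.exp (-(2 * ν * t)) := by
  set ψ : ℝ → ℂ := fun t ↦ Complex.exp (-(ν : ℂ) * t) * φ t with hψ_def
  have hψ : Continuous ψ := by fun_prop
  have hψc : HasCompactSupport ψ := hφc.mul_left
  have h1 : ∀ ξ : ℝ, (∫ t : ℝ, Complex.exp (-(Complex.I * ξ * t) - (ν : ℂ) * t) * φ t)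
      = 𝓕 ψ (ξ / (2 * π)) := by
    intro ξ
    rw [Real.fourier_real_eq_integral_exp_smul]
    congr 1 with t
    rw [smul_eq_mul, hψ_def, ← mul_assoc, ← Complex.exp_add]
    congr 2
    have hpi : (π : ℂ) ≠ 0 := Complex.ofReal_ne_zero.mpr Real.pi_ne_zero
    push_cast
    field_simp
    ring
  have h2 : ∀ ξ : ℝ, ‖((Real.sqrt (2 * Real.pi))⁻¹ : ℂ) *
        ∫ t : ℝ, Complex.exp (-(Complex.I * ξ * t) - (ν : ℂ) * t) * φ t‖ ^ 2
      = (2 * π)⁻¹ * ‖𝓕 ψ (ξ / (2 * π))‖ ^ 2 := by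
    intro ξ
    rw [h1 ξ, norm_mul, mul_pow]
    congr 1
    rw [norm_inv, Complex.norm_real, Real.norm_eq_abs, _root_.abs_of_nonneg (Real.sqrt_nonneg _),
      inv_pow, Real.sq_sqrt (by positivity)]
  calc ∫ ξ : ℝ, ‖((Real.sqrt (2 * Real.pi))⁻¹ : ℂ) *
          ∫ t : ℝ, Complex.exp (-(Complex.I * ξ * t) - (ν : ℂ) * t) * φ t‖ ^ 2
      = ∫ ξ : ℝ, (2 * π)⁻¹ * ‖𝓕 ψ (ξ / (2 * π))‖ ^ 2 := by
        exact integral_congr_ae (ae_of_all _ fun ξ ↦ h2 ξ)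
    _ = (2 * π)⁻¹ * ∫ ξ : ℝ, ‖𝓕 ψ (ξ / (2 * π))‖ ^ 2 := integral_const_mul _ _
    _ = (2 * π)⁻¹ * (|2 * π| • ∫ u : ℝ, ‖𝓕 ψ u‖ ^ 2) := by
        rw [MeasureTheory.Measure.integral_comp_div (fun u : ℝ ↦ ‖𝓕 ψ u‖ ^ 2) (2 * π)]
    _ = ∫ u : ℝ, ‖𝓕 ψ u‖ ^ 2 := by
        rw [smul_eq_mul, _root_.abs_of_pos (by positivity), ← mul_assoc,
          inv_mul_cancel₀ (by positivity), one_mul]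
    _ = ∫ t : ℝ, ‖ψ t‖ ^ 2 := plancherel_cc ψ hψ hψc
    _ = ∫ t : ℝ, ‖φ t‖ ^ 2 * Real.exp (-(2 * ν * t)) := by
        congr 1 with t
        rw [hψ_def]
        rw [norm_mul, mul_pow, mul_comm]
        congr 1
        rw [Complex.norm_exp,
          show (-(ν : ℂ) * t) = ((-ν * t : ℝ) : ℂ) by push_cast; ring,
          Complex.ofReal_re, sq, ← Real.exp_add]
        ring_nf
end

section
/- Let H be a complex Hilbert space, let A be a densely defined closed linear operator on H with domain dom(A) that is skew-self-adjoint, i.e. its Hilbert-space adjoint satisfies A* = −A (in particular dom(A*) = dom(A)), and let B : H → H be a bounded linear operator with Re⟨B u, u⟩ ≥ c‖u‖² for all u ∈ H and some c > 0. Then B + A : dom(A) → H is bijective, and the inverse satisfies ‖(B + A)^{-1} f‖ ≤ (1/c)‖f‖ for all f ∈ H. -/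
/-- If `A` is a densely defined, closed, skew-self-adjoint (`A* = −A`) operator
on a complex Hilbert space `H` and `B : H → H` is bounded with `Re⟨Bu, u⟩ ≥ c‖u‖²` for some
`c > 0`, then `B + A : dom(A) → H` is bijective with `‖(B + A)⁻¹ f‖ ≤ (1/c)‖f‖`. -/
theorem stmt_13
    {H : Type*} [NormedAddCommGroup H] [InnerProductSpace ℂ H] [CompleteSpace H]
    (A : H →ₗ.[ℂ] H) (hdense : Dense (A.domain : Set H)) (hclosed : A.IsClosed)
    (hskew : A.adjoint = -A)
    (B : H →L[ℂ] H) (c : ℝ) (hc : 0 < c)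
    (hcoer : ∀ u : H, c * ‖u‖ ^ 2 ≤ (inner ℂ (B u) u : ℂ).re) :
    Function.Bijective (fun u : A.domain => B (u : H) + A u) ∧
    ∀ (u : A.domain) (f : H), B (u : H) + A u = f → ‖(u : H)‖ ≤ (1 / c) * ‖f‖ := by
  -- the formal skew-adjointness
  have hform : ∀ x y : A.domain, (inner ℂ (A x) (y : H) : ℂ) = - inner ℂ (x : H) (A y) := by
    have h := LinearPMap.adjoint_isFormalAdjoint hdense (T := A)
    rw [hskew] at h
    intro x y
    have := h x y
    rw [LinearPMap.neg_apply] at this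
    rw [← this, inner_neg_left, neg_neg]
  -- real part of ⟪A u, u⟫ vanishes
  have hre : ∀ u : A.domain, (inner ℂ (A u) (u : H) : ℂ).re = 0 := by
    intro u
    have h1 : (inner ℂ (A u) (u : H) : ℂ) = - inner ℂ ((u : H)) (A u) := hform u u
    have h2 : (inner ℂ ((u : H)) (A u) : ℂ) = starRingEnd ℂ (inner ℂ (A u) (u : H)) :=
      (inner_conj_symm _ _).symm
    rw [h2] at h1
    have := congrArg Complex.re h1
    simp only [Complex.neg_re, Complex.conj_re] at this
    linarith
  -- the operator B + A as a linear map on the domain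
  set T : A.domain →ₗ[ℂ] H :=
    (B.toLinearMap.comp A.domain.subtype) + A.toFun with hT
  have hTapp : ∀ u : A.domain, T u = B (u : H) + A u := fun u => rfl
  -- the key estimate
  have hest : ∀ u : A.domain, ‖(u : H)‖ ≤ (1 / c) * ‖T u‖ := by
    intro u
    have h1 : c * ‖(u : H)‖ ^ 2 ≤ (inner ℂ (T u) (u : H) : ℂ).re := by
      rw [hTapp, inner_add_left]
      have := hre u
      have := hcoer (u : H)
      simp only [Complex.add_re]
      linarith
    have h2 : (inner ℂ (T u) (u : H) : ℂ).re ≤ ‖T u‖ * ‖(u : H)‖ :=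
      (Complex.re_le_norm _).trans
        (by simpa using norm_inner_le_norm (𝕜 := ℂ) (T u) ((u : H)))
    rcases eq_or_lt_of_le (norm_nonneg (u : H)) with h0 | h0
    · rw [← h0]
      positivity
    · have key : c * ‖(u : H)‖ ≤ ‖T u‖ := by
        have h3 := h1.trans h2
        nlinarith
      rw [div_mul_eq_mul_div, le_div_iff₀ hc, mul_comm, one_mul]
      exact key
  -- injectivity
  have hinj : Function.Injective T := by
    intro u v huv
    have hz : T (u - v) = 0 := by rw [map_sub, huv, sub_self]
    have h := hest (u - v)
    rw [hz, norm_zero, mul_zero] at h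
    have h2 : ((u - v : A.domain) : H) = 0 := norm_le_zero_iff.mp h
    rw [Submodule.coe_sub, sub_eq_zero] at h2
    exact Subtype.ext h2
  -- the range of T is closed
  have hrange_closed : IsClosed ((LinearMap.range T : Submodule ℂ H) : Set H) := by
    apply isClosed_of_closure_subset
    intro f hf
    rw [mem_closure_iff_seq_limit] at hf
    obtain ⟨x, hx, hxf⟩ := hf
    choose u hu using hx
    have hTc : CauchySeq (fun n => T (u n)) := by
      have : (fun n => T (u n)) = x := funext hu
      rw [this]
      exact hxf.cauchySeq
    have hcu : CauchySeq (fun n => ((u n : H))) := by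
      rw [Metric.cauchySeq_iff] at hTc ⊢
      intro ε hε
      obtain ⟨N, hN⟩ := hTc (c * ε) (by positivity)
      refine ⟨N, fun m hm n hn => ?_⟩
      have h1 := hN m hm n hn
      have h2 : ‖((u m - u n : A.domain) : H)‖ ≤ (1 / c) * ‖T (u m - u n)‖ :=
        hest (u m - u n)
      rw [map_sub, Submodule.coe_sub] at h2
      rw [dist_eq_norm] at h1 ⊢
      calc ‖(u m : H) - (u n : H)‖ ≤ (1 / c) * ‖T (u m) - T (u n)‖ := h2
        _ < (1 / c) * (c * ε) := by
            apply mul_lt_mul_of_pos_left h1 (by positivity)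
        _ = ε := by field_simp
    obtain ⟨w, hw⟩ := cauchySeq_tendsto_of_complete hcu
    -- A (u n) tends to f - B w
    have hA_tendsto : Filter.Tendsto (fun n => A (u n)) Filter.atTop (nhds (f - B w)) := by
      have h1 : Filter.Tendsto (fun n => T (u n)) Filter.atTop (nhds f) := by
        have : (fun n => T (u n)) = x := funext hu
        rw [this]; exact hxf
      have h2 : Filter.Tendsto (fun n => B ((u n : H))) Filter.atTop (nhds (B w)) :=
        (B.continuous.tendsto w).comp hw
      have h3 := h1.sub h2
      have : (fun n => T (u n) - B ((u n : H))) = fun n => A (u n) := by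
        funext n; rw [hTapp]; abel
      rwa [this] at h3
    -- use closedness of the graph
    have hmem : (w, f - B w) ∈ A.graph := by
      apply hclosed.mem_of_tendsto (hw.prodMk_nhds hA_tendsto)
      exact Filter.Eventually.of_forall fun n => A.mem_graph (u n)
    rw [LinearPMap.mem_graph_iff] at hmem
    obtain ⟨y, hy1, hy2⟩ := hmem
    refine ⟨y, ?_⟩
    rw [hTapp, hy1, hy2]
    simp
  -- orthogonal complement of the range is trivial
  have horth : (LinearMap.range T : Submodule ℂ H)ᗮ = ⊥ := by
    rw [Submodule.eq_bot_iff]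
    intro f hf
    rw [Submodule.mem_orthogonal] at hf
    have hw : ∀ x : A.domain,
        (inner ℂ (-(ContinuousLinearMap.adjoint B f)) ((x : H)) : ℂ) = inner ℂ f (A x) := by
      intro x
      have h0 : (inner ℂ (T x) f : ℂ) = 0 := hf _ ⟨x, rfl⟩
      have h1 : (inner ℂ f (T x) : ℂ) = 0 := by
        rw [← inner_conj_symm, h0, map_zero]
      rw [hTapp, inner_add_right] at h1
      have h2 : (inner ℂ f (A x) : ℂ) = - inner ℂ f (B ((x : H))) :=
        eq_neg_of_add_eq_zero_right h1
      rw [inner_neg_left, ContinuousLinearMap.adjoint_inner_left, h2]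
    have hfmem : f ∈ A.adjoint.domain :=
      LinearPMap.mem_adjoint_domain_of_exists _ ⟨-(ContinuousLinearMap.adjoint B f), hw⟩
    have hadj : A.adjoint ⟨f, hfmem⟩ = -(ContinuousLinearMap.adjoint B f) :=
      LinearPMap.adjoint_apply_eq hdense _ hw
    obtain ⟨hdom, happ⟩ := LinearPMap.ext_iff.mp hskew
    have hfA : f ∈ A.domain := by
      rw [← LinearPMap.neg_domain A, ← hdom]; exact hfmem
    have heq : A.adjoint ⟨f, hfmem⟩ = (-A) ⟨f, hfA⟩ := happ (x := f) (hf := hfmem) (hg := hfA)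
    rw [LinearPMap.neg_apply] at heq
    have hAf : A ⟨f, hfA⟩ = ContinuousLinearMap.adjoint B f := by
      rw [hadj] at heq
      exact (neg_injective heq).symm
    have h3 : (inner ℂ (ContinuousLinearMap.adjoint B f) f : ℂ).re = 0 := by
      rw [← hAf]
      exact hre ⟨f, hfA⟩
    have h4 : (inner ℂ (ContinuousLinearMap.adjoint B f) f : ℂ) = inner ℂ f (B f) :=
      ContinuousLinearMap.adjoint_inner_left B f f
    have h5 : (inner ℂ f (B f) : ℂ).re = (inner ℂ (B f) f : ℂ).re := by
      have h5' : (inner ℂ f (B f) : ℂ) = starRingEnd ℂ (inner ℂ (B f) f) :=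
        (inner_conj_symm _ _).symm
      rw [h5', Complex.conj_re]
    have h6 := hcoer f
    have h7 : c * ‖f‖ ^ 2 ≤ 0 := by
      rw [h4, h5] at h3
      linarith
    have h8 : ‖f‖ = 0 := by
      by_contra hne
      have hpos : 0 < ‖f‖ := lt_of_le_of_ne (norm_nonneg f) (Ne.symm hne)
      nlinarith [mul_pos hc (pow_pos hpos 2)]
    exact norm_eq_zero.mp h8
  haveI : CompleteSpace (LinearMap.range T : Submodule ℂ H) :=
    hrange_closed.completeSpace_coe
  have hsurj : Function.Surjective T :=
    LinearMap.range_eq_top.mp (Submodule.orthogonal_eq_bot_iff.mp horth)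
  have hfun : (fun u : A.domain => B (u : H) + A u) = T := funext fun u => (hTapp u).symm
  constructor
  · rw [hfun]
    exact ⟨hinj, hsurj⟩
  · intro u f h
    rw [← h, ← hTapp]
    exact hest u
end
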